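/- arXiv:1511.01111 — 6 statements merged into one kernel-verified Lean document; each statement's English description precedes it below -/
import Mathlib

section
/- For every symmetric norm l on R^n there exist constants 0 < a <= b with b/a <= sqrt(n) such that a * ||x||_2 <= l(x) <= b * ||x||_2 for all x in R^n. -/
open Finset

namespace JTaux

/-- Abel-type summation comparison: if `G` is nonnegative and nonincreasing on `[0,n)`
and all partial sums of `U` are dominated by those of `W`, then `∑ G U ≤ ∑ G W`. -/
lemma abel_sum_le : ∀ (n : ℕ) (G U W : ℕ → ℝ),
    (∀ i j, i ≤ j → j < n → G j ≤ G i) →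
    (∀ i, i < n → 0 ≤ G i) →
    (∀ k, k ≤ n → ∑ i ∈ range k, U i ≤ ∑ i ∈ range k, W i) →
    ∑ i ∈ range n, G i * U i ≤ ∑ i ∈ range n, G i * W i := by
  intro n
  induction n with
  | zero => intro G U W _ _ _; simp
  | succ n ih =>
    intro G U W hGanti hGpos h
    set G' : ℕ → ℝ := fun i => G i - G n with hG'
    have hsplit : ∀ V : ℕ → ℝ, ∑ i ∈ range (n+1), G i * V i
        = ∑ i ∈ range n, G' i * V i + G n * ∑ i ∈ range (n+1), V i := by
      intro V
      have h1 : ∑ i ∈ range (n+1), G i * V i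
          = ∑ i ∈ range (n+1), (G' i * V i + G n * V i) := by
        refine Finset.sum_congr rfl fun i _ => ?_
        simp only [hG']; ring
      rw [h1, Finset.sum_add_distrib, ← Finset.mul_sum,
        Finset.sum_range_succ (fun i => G' i * V i)]
      simp [hG']
    rw [hsplit U, hsplit W]
    have h1 : ∑ i ∈ range n, G' i * U i ≤ ∑ i ∈ range n, G' i * W i := by
      refine ih G' U W ?_ ?_ ?_
      · intro i j hij hj
        have := hGanti i j hij (Nat.lt_succ_of_lt hj)
        simp only [hG']; linarith
      · intro i hi
        simp only [hG', sub_nonneg]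
        exact hGanti i n (le_of_lt hi) (Nat.lt_succ_self n)
      · intro k hk; exact h k (le_trans hk (Nat.le_succ n))
    have h2 : G n * ∑ i ∈ range (n+1), U i ≤ G n * ∑ i ∈ range (n+1), W i :=
      mul_le_mul_of_nonneg_left (h (n+1) le_rfl) (hGpos n (Nat.lt_succ_self n))
    linarith

/-- Cauchy–Schwarz bound on partial sums of a unit vector. -/
lemma sum_range_le_sqrt (n k : ℕ) (U : ℕ → ℝ)
    (hsum : ∑ i ∈ range n, U i ^ 2 = 1) (hk : k ≤ n) :
    ∑ i ∈ range k, U i ≤ Real.sqrt k := by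
  have h1 : (∑ i ∈ range k, U i) ^ 2 ≤ (k : ℝ) * ∑ i ∈ range k, U i ^ 2 := by
    simpa using sq_sum_le_card_mul_sum_sq (s := range k) (f := U)
  have h2 : ∑ i ∈ range k, U i ^ 2 ≤ 1 := by
    rw [← hsum]
    refine Finset.sum_le_sum_of_subset_of_nonneg (Finset.range_subset_range.2 hk) ?_
    intro i _ _; positivity
  have h3 : (∑ i ∈ range k, U i) ^ 2 ≤ (k : ℝ) := by nlinarith [Nat.cast_nonneg (α := ℝ) k]
  exact Real.le_sqrt_of_sq_le h3

/-- Lower bound on partial sums of a sorted nonnegative unit vector. -/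
lemma sqrt_le_sum_range (n k : ℕ) (hn : 0 < n) (W : ℕ → ℝ) (hW : ∀ i, 0 ≤ W i)
    (hanti : ∀ i j, i ≤ j → j < n → W j ≤ W i)
    (hsum : ∑ i ∈ range n, W i ^ 2 = 1) (hk : k ≤ n) :
    Real.sqrt ((k : ℝ) / n) ≤ ∑ i ∈ range k, W i := by
  rcases Nat.eq_zero_or_pos k with rfl | hk1
  · simp
  have hnR : (0:ℝ) < n := by exact_mod_cast hn
  have hkR : (0:ℝ) < k := by exact_mod_cast hk1
  have hknR : (k : ℝ) ≤ n := by exact_mod_cast hk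
  set c := W (k-1) ^ 2 with hc
  set A := ∑ i ∈ range k, W i ^ 2 with hA
  set B := ∑ i ∈ Ico k n, W i ^ 2 with hB
  have hkc : (k : ℝ) * c ≤ A := by
    calc (k:ℝ) * c = ∑ _i ∈ range k, c := by rw [Finset.sum_const, card_range]; ring
    _ ≤ A := by
        refine Finset.sum_le_sum fun i hi => ?_
        have hik : i ≤ k - 1 := Nat.le_pred_of_lt (mem_range.1 hi)
        have h1 : W (k-1) ≤ W i := hanti i (k-1) hik (by omega)
        have h2 := hW (k-1)
        simp only [hc]
        nlinarith [hW i]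
  have hBc : B ≤ ((n:ℝ) - k) * c := by
    calc B ≤ ∑ _i ∈ Ico k n, c := by
          refine Finset.sum_le_sum fun i hi => ?_
          obtain ⟨hi1, hi2⟩ := Finset.mem_Ico.1 hi
          have h1 : W i ≤ W (k-1) := hanti (k-1) i (by omega) hi2
          have h2 := hW i
          simp only [hc]
          nlinarith [hW (k-1)]
    _ = ((n:ℝ) - k) * c := by
        rw [Finset.sum_const, Nat.card_Ico, nsmul_eq_mul, Nat.cast_sub hk]
  have hAB : A + B = 1 := by rw [hA, hB, Finset.sum_range_add_sum_Ico _ hk]; exact hsum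
  have hA2 : (k : ℝ) / n ≤ A := by
    rw [div_le_iff₀ hnR]
    nlinarith [hkc, hBc, hAB, hkR.le, hknR]
  have hSS : A ≤ (∑ i ∈ range k, W i) ^ 2 :=
    Finset.sum_sq_le_sq_sum_of_nonneg fun i _ => hW i
  calc Real.sqrt ((k:ℝ)/n) ≤ Real.sqrt ((∑ i ∈ range k, W i) ^ 2) :=
        Real.sqrt_le_sqrt (le_trans hA2 hSS)
  _ = ∑ i ∈ range k, W i := Real.sqrt_sq (Finset.sum_nonneg fun i _ => hW i)

end JTaux

/-- John's theorem for symmetric norms: every symmetric norm `l` on `ℝ^n` admits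
constants `0 < a ≤ b` with `b / a ≤ √n` such that
`a ‖x‖₂ ≤ l x ≤ b ‖x‖₂` for all `x`. -/
theorem johns_theorem_symmetric_norms {n : ℕ} (hn : 0 < n) (l : (Fin n → ℝ) → ℝ)
    (htri : ∀ x y, l (x + y) ≤ l x + l y)
    (hhom : ∀ (c : ℝ) x, l (c • x) = |c| * l x)
    (hdef : ∀ x, l x = 0 ↔ x = 0)
    (hperm : ∀ (σ : Equiv.Perm (Fin n)) x, l (fun i => x (σ i)) = l x)
    (hsign : ∀ x, l (fun i => |x i|) = l x) :
    ∃ a b : ℝ, 0 < a ∧ a ≤ b ∧ b / a ≤ Real.sqrt n ∧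
      ∀ x : Fin n → ℝ,
        a * Real.sqrt (∑ i, (x i) ^ 2) ≤ l x ∧
          l x ≤ b * Real.sqrt (∑ i, (x i) ^ 2) := by
  classical
  -- basic facts about `l`
  have l0 : l 0 = 0 := (hdef 0).mpr rfl
  have lneg : ∀ x, l (-x) = l x := by
    intro x
    have := hhom (-1) x
    simpa using this
  have lnonneg : ∀ x, 0 ≤ l x := by
    intro x
    have h := htri x (-x)
    rw [add_neg_cancel, l0, lneg] at h
    linarith
  have lscale : ∀ (t : ℝ) x, 0 ≤ t → l (t • x) = t * l x := by
    intro t x ht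
    rw [hhom, abs_of_nonneg ht]
  -- sorted rearrangement
  have lsorted : ∀ x : Fin n → ℝ, ∃ x' : Fin n → ℝ,
      (∀ i j : Fin n, i ≤ j → x' j ≤ x' i) ∧ (∀ i, 0 ≤ x' i) ∧ l x' = l x ∧
      ∑ i, x' i ^ 2 = ∑ i, x i ^ 2 := by
    intro x
    set τ := Tuple.sort (fun i => -|x i|) with hτ
    have hmono := Tuple.monotone_sort (fun i => -|x i|)
    refine ⟨fun i => |x (τ i)|, ?_, fun i => abs_nonneg _, ?_, ?_⟩
    · intro i j hij
      have := hmono hij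
      simp only [Function.comp_apply, ← hτ] at this
      linarith
    · have h1 : l (fun i => |(fun j => x (τ j)) i|) = l (fun j => x (τ j)) :=
        hsign (fun j => x (τ j))
      rw [h1, hperm τ x]
    · have h1 : ∀ i : Fin n, |x (τ i)| ^ 2 = (fun j => x j ^ 2) (τ i) := by
        intro i; simp [sq_abs]
      calc ∑ i, |x (τ i)| ^ 2 = ∑ i, (fun j => x j ^ 2) (τ i) := by
            exact Finset.sum_congr rfl fun i _ => h1 i
      _ = ∑ i, x i ^ 2 := Equiv.sum_comp τ (fun j => x j ^ 2)
  -- dual functional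
  have ldual : ∀ y : Fin n → ℝ, y ≠ 0 → ∃ g : Fin n → ℝ,
      (∀ v, ∑ i, v i * g i ≤ l v) ∧ ∑ i, y i * g i = l y := by
    intro y hy0
    set e := LinearEquiv.toSpanNonzeroSingleton ℝ (Fin n → ℝ) y hy0 with he
    set φ : (ℝ ∙ y) →ₗ[ℝ] ℝ := l y • (e.symm : (ℝ ∙ y) →ₗ[ℝ] ℝ) with hφ
    have hf : ∀ z : (ℝ ∙ y), φ z ≤ l z := by
      intro z
      set t := e.symm z with ht
      have hz : (z : Fin n → ℝ) = t • y := by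
        have : e t = z := by rw [ht]; exact e.apply_symm_apply z
        rw [← this]
        simp [he]
      have h1 : φ z = l y * t := by simp [hφ, ht]
      rw [h1, hz, hhom]
      have : t * l y ≤ |t| * l y :=
        mul_le_mul_of_nonneg_right (le_abs_self t) (lnonneg y)
      linarith
    obtain ⟨g', hg'eq, hg'le⟩ :=
      exists_extension_of_le_sublinear ⟨ℝ ∙ y, φ⟩ l
        (fun c hc x => by rw [hhom, abs_of_pos hc]) htri hf
    set g : Fin n → ℝ := fun i => g' (fun j => if i = j then 1 else 0) with hg
    have hrepr : ∀ v : Fin n → ℝ, ∑ i, v i * g i = g' v := by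
      intro v
      conv_rhs => rw [pi_eq_sum_univ v]
      rw [map_sum]
      refine Finset.sum_congr rfl fun i _ => ?_
      rw [map_smul]
      simp [hg]
    refine ⟨g, fun v => (hrepr v).symm ▸ hg'le v, ?_⟩
    rw [hrepr y]
    have hmem : y ∈ (ℝ ∙ y) := Submodule.mem_span_singleton_self y
    have h1 := hg'eq ⟨y, hmem⟩
    have h2 : φ ⟨y, hmem⟩ = l y := by
      have : e.symm ⟨y, hmem⟩ = 1 := by
        rw [LinearEquiv.symm_apply_eq]
        exact (LinearEquiv.toSpanNonzeroSingleton_one ℝ (Fin n → ℝ) y hy0).symm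
      simp [hφ, this]
    rw [← h2]
    exact h1
  -- core pairwise inequality
  have pair : ∀ u w : Fin n → ℝ, (∑ i, u i ^ 2 = 1) → (∑ i, w i ^ 2 = 1) →
      l u ≤ Real.sqrt n * l w := by
    intro u w hu hw
    obtain ⟨u', hu'anti, hu'pos, hu'l, hu'sq⟩ := lsorted u
    obtain ⟨w', hw'anti, hw'pos, hw'l, hw'sq⟩ := lsorted w
    rw [hu] at hu'sq
    rw [hw] at hw'sq
    have hu'0 : u' ≠ 0 := by
      intro h
      rw [h] at hu'sq
      simp at hu'sq
    obtain ⟨g, hgle, hgeq⟩ := ldual u' hu'0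
    set τ := Tuple.sort (fun i => -|g i|) with hτ
    have hmono := Tuple.monotone_sort (fun i => -|g i|)
    set G : Fin n → ℝ := fun i => |g (τ i)| with hG
    have hGanti : ∀ i j : Fin n, i ≤ j → G j ≤ G i := by
      intro i j hij
      have := hmono hij
      simp only [Function.comp_apply, ← hτ] at this
      simp only [hG]
      linarith
    have hGpos : ∀ i, 0 ≤ G i := fun i => abs_nonneg _
    -- step 1-3 : l u' ≤ ∑ u' G
    have step3 : l u' ≤ ∑ i, u' i * G i := by
      have s1 : l u' = ∑ i, u' i * g i := hgeq.symm
      have s2 : ∑ i, u' i * g i ≤ ∑ i, u' i * |g i| :=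
        Finset.sum_le_sum fun i _ =>
          mul_le_mul_of_nonneg_left (le_abs_self _) (hu'pos i)
      have s3 : ∑ i, u' i * |g i| = ∑ i, u' i * G (τ.symm i) := by
        refine Finset.sum_congr rfl fun i _ => ?_
        simp [hG]
      have hmv : Monovary u' G := by
        intro i j hGij
        rcases le_total i j with h | h
        · exact absurd (hGanti i j h) (not_le.2 hGij)
        · exact hu'anti j i h
      have s4 : ∑ i, u' i * G (τ.symm i) ≤ ∑ i, u' i * G i :=
        hmv.sum_mul_comp_perm_le_sum_mul (σ := τ.symm)
      rw [s1]
      calc ∑ i, u' i * g i ≤ ∑ i, u' i * |g i| := s2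
      _ = ∑ i, u' i * G (τ.symm i) := s3
      _ ≤ ∑ i, u' i * G i := s4
    -- step 4 : ∑ u' G ≤ √n ∑ w' G  (Abel)
    set UN : ℕ → ℝ := fun k => if h : k < n then u' ⟨k, h⟩ else 0 with hUN
    set WN : ℕ → ℝ := fun k => if h : k < n then w' ⟨k, h⟩ else 0 with hWN
    set GN : ℕ → ℝ := fun k => if h : k < n then G ⟨k, h⟩ else 0 with hGN
    have hUNsq : ∑ i ∈ range n, UN i ^ 2 = 1 := by
      rw [← hu'sq]
      rw [← Fin.sum_univ_eq_sum_range (fun k => UN k ^ 2) n]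
      refine Finset.sum_congr rfl fun i _ => ?_
      simp [hUN, i.isLt]
    have hWNsq : ∑ i ∈ range n, WN i ^ 2 = 1 := by
      rw [← hw'sq]
      rw [← Fin.sum_univ_eq_sum_range (fun k => WN k ^ 2) n]
      refine Finset.sum_congr rfl fun i _ => ?_
      simp [hWN, i.isLt]
    have hsqn : (0:ℝ) ≤ Real.sqrt n := Real.sqrt_nonneg _
    have habel : ∑ i ∈ range n, GN i * UN i
        ≤ ∑ i ∈ range n, GN i * (Real.sqrt n * WN i) := by
      refine JTaux.abel_sum_le n GN UN (fun k => Real.sqrt n * WN k) ?_ ?_ ?_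
      · intro i j hij hj
        have hi : i < n := lt_of_le_of_lt hij hj
        simp only [hGN, dif_pos hi, dif_pos hj]
        exact hGanti ⟨i, hi⟩ ⟨j, hj⟩ hij
      · intro i hi
        simp only [hGN, dif_pos hi]
        exact hGpos _
      · intro k hk
        have hUb : ∑ i ∈ range k, UN i ≤ Real.sqrt k :=
          JTaux.sum_range_le_sqrt n k UN hUNsq hk
        have hWb : Real.sqrt ((k : ℝ) / n) ≤ ∑ i ∈ range k, WN i := by
          refine JTaux.sqrt_le_sum_range n k hn WN ?_ ?_ hWNsq hk
          · intro i
            simp only [hWN]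
            split
            · exact hw'pos _
            · exact le_refl 0
          · intro i j hij hj
            have hi : i < n := lt_of_le_of_lt hij hj
            simp only [hWN, dif_pos hi, dif_pos hj]
            exact hw'anti ⟨i, hi⟩ ⟨j, hj⟩ hij
        have hnR : (0:ℝ) < n := by exact_mod_cast hn
        have hkey : Real.sqrt k = Real.sqrt n * Real.sqrt ((k:ℝ)/n) := by
          rw [← Real.sqrt_mul hnR.le]
          congr 1
          field_simp
        calc ∑ i ∈ range k, UN i ≤ Real.sqrt k := hUb
        _ = Real.sqrt n * Real.sqrt ((k:ℝ)/n) := hkey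
        _ ≤ Real.sqrt n * ∑ i ∈ range k, WN i :=
            mul_le_mul_of_nonneg_left hWb hsqn
        _ = ∑ i ∈ range k, Real.sqrt n * WN i := by rw [Finset.mul_sum]
    have step4 : ∑ i, u' i * G i ≤ Real.sqrt n * ∑ i, w' i * G i := by
      have e1 : ∑ i, u' i * G i = ∑ i ∈ range n, GN i * UN i := by
        rw [← Fin.sum_univ_eq_sum_range (fun k => GN k * UN k) n]
        refine Finset.sum_congr rfl fun i _ => ?_
        simp [hGN, hUN, i.isLt, mul_comm]
      have e2 : ∑ i, w' i * G i = ∑ i ∈ range n, GN i * WN i := by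
        rw [← Fin.sum_univ_eq_sum_range (fun k => GN k * WN k) n]
        refine Finset.sum_congr rfl fun i _ => ?_
        simp [hGN, hWN, i.isLt, mul_comm]
      rw [e1, e2, Finset.mul_sum]
      calc ∑ i ∈ range n, GN i * UN i
          ≤ ∑ i ∈ range n, GN i * (Real.sqrt n * WN i) := habel
      _ = ∑ i ∈ range n, Real.sqrt n * (GN i * WN i) := by
          refine Finset.sum_congr rfl fun i _ => ?_; ring
    -- step 5 : ∑ w' G ≤ l w'
    have step5 : ∑ i, w' i * G i ≤ l w' := by
      set v : Fin n → ℝ := fun j => if 0 ≤ g j then w' (τ.symm j) else -(w' (τ.symm j))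
        with hv
      have habsv : (fun j => |v j|) = fun j => w' (τ.symm j) := by
        funext j
        by_cases h : 0 ≤ g j
        · simp [hv, h, abs_of_nonneg (hw'pos _)]
        · simp [hv, h, abs_of_nonneg (hw'pos _)]
      have hlv : l v = l w' := by
        have h1 : l (fun j => |v j|) = l v := hsign v
        rw [habsv] at h1
        rw [← h1, hperm τ.symm w']
      have hvg : ∑ j, v j * g j = ∑ i, w' i * G i := by
        have h1 : ∀ j, v j * g j = w' (τ.symm j) * |g j| := by
          intro j
          by_cases h : 0 ≤ g j
          · simp [hv, h, abs_of_nonneg h]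
          · push_neg at h
            simp only [hv, if_neg (not_le.2 h), abs_of_neg h]
            ring
        calc ∑ j, v j * g j = ∑ j, w' (τ.symm j) * |g j| :=
              Finset.sum_congr rfl fun j _ => h1 j
        _ = ∑ i, w' (τ.symm (τ i)) * |g (τ i)| :=
              (Equiv.sum_comp τ (fun j => w' (τ.symm j) * |g j|)).symm
        _ = ∑ i, w' i * G i := by
              refine Finset.sum_congr rfl fun i _ => ?_
              simp [hG]
      calc ∑ i, w' i * G i = ∑ j, v j * g j := hvg.symm
      _ ≤ l v := hgle v
      _ = l w' := hlv
    -- combine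
    calc l u = l u' := hu'l.symm
    _ ≤ ∑ i, u' i * G i := step3
    _ ≤ Real.sqrt n * ∑ i, w' i * G i := step4
    _ ≤ Real.sqrt n * l w' := mul_le_mul_of_nonneg_left step5 hsqn
    _ = Real.sqrt n * l w := by rw [hw'l]
  -- continuity of l
  set C : ℝ := ∑ i : Fin n, l (fun j => if i = j then 1 else 0) with hC
  have hCpos : 0 ≤ C := Finset.sum_nonneg fun i _ => lnonneg _
  have hbound : ∀ z : Fin n → ℝ, l z ≤ C * ‖z‖ := by
    intro z
    have h1 : l z ≤ ∑ i : Fin n, l ((z i • (fun j => if i = j then (1:ℝ) else 0) : Fin n → ℝ)) := by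
      conv_lhs => rw [pi_eq_sum_univ z]
      exact Finset.le_sum_of_subadditive l l0.le htri _ _
    have h2 : ∀ i : Fin n, l ((z i • (fun j => if i = j then (1:ℝ) else 0) : Fin n → ℝ))
        ≤ l (fun j => if i = j then 1 else 0) * ‖z‖ := by
      intro i
      rw [hhom]
      have hzi : |z i| ≤ ‖z‖ := by
        have := norm_le_pi_norm z i
        simpa [Real.norm_eq_abs] using this
      calc |z i| * l (fun j => if i = j then (1:ℝ) else 0)
          ≤ ‖z‖ * l (fun j => if i = j then (1:ℝ) else 0) :=
            mul_le_mul_of_nonneg_right hzi (lnonneg _)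
      _ = l (fun j => if i = j then (1:ℝ) else 0) * ‖z‖ := mul_comm _ _
    calc l z ≤ ∑ i : Fin n, l ((z i • (fun j => if i = j then (1:ℝ) else 0) : Fin n → ℝ)) := h1
    _ ≤ ∑ i : Fin n, l (fun j => if i = j then 1 else 0) * ‖z‖ :=
        Finset.sum_le_sum fun i _ => h2 i
    _ = C * ‖z‖ := by rw [hC, Finset.sum_mul]
  have hcont : Continuous l := by
    refine (LipschitzWith.of_dist_le_mul (K := C.toNNReal) (f := l) ?_).continuous
    intro x y
    have h1 : l x ≤ l y + l (x - y) := by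
      have := htri y (x - y)
      simpa using this
    have h2 : l y ≤ l x + l (y - x) := by
      have := htri x (y - x)
      simpa using this
    have h3 : l (x - y) ≤ C * ‖x - y‖ := hbound _
    have h4 : l (y - x) ≤ C * ‖y - x‖ := hbound _
    rw [norm_sub_rev] at h4
    have hd : dist x y = ‖x - y‖ := dist_eq_norm x y
    rw [Real.dist_eq, hd]
    have hK : (C.toNNReal : ℝ) = C := Real.coe_toNNReal C hCpos
    rw [hK]
    rw [abs_le]
    constructor <;> linarith
  -- compact sphere and minimum
  set S : Set (Fin n → ℝ) := {x | ∑ i, x i ^ 2 = 1} with hS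
  have hclosed : IsClosed S := by
    have : Continuous fun x : Fin n → ℝ => ∑ i, x i ^ 2 :=
      continuous_finset_sum _ fun i _ => (continuous_apply i).pow 2
    exact isClosed_eq this continuous_const
  have hbdd : Bornology.IsBounded S := by
    refine (Metric.isBounded_closedBall (x := (0 : Fin n → ℝ)) (r := 1)).subset ?_
    intro x hx
    simp only [Metric.mem_closedBall, dist_zero_right]
    refine pi_norm_le_iff_of_nonneg zero_le_one |>.2 fun i => ?_
    have h1 : x i ^ 2 ≤ 1 := by
      rw [← hx]
      refine Finset.single_le_sum (f := fun i => x i ^ 2) (fun j _ => by positivity)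
        (Finset.mem_univ i)
    rw [Real.norm_eq_abs]
    nlinarith [abs_nonneg (x i), sq_abs (x i)]
  have hcompact : IsCompact S := Metric.isCompact_of_isClosed_isBounded hclosed hbdd
  have hne : S.Nonempty := by
    refine ⟨fun j => if (⟨0, hn⟩ : Fin n) = j then 1 else 0, ?_⟩
    simp only [hS, Set.mem_setOf_eq]
    rw [Finset.sum_eq_single (⟨0, hn⟩ : Fin n)]
    · simp
    · intro j _ hj
      simp [Ne.symm hj]
    · intro h
      exact absurd (Finset.mem_univ _) h
  obtain ⟨w, hwS, hwmin⟩ := hcompact.exists_isMinOn hne hcont.continuousOn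
  have hwS' : ∑ i, w i ^ 2 = 1 := hwS
  have hw0 : w ≠ 0 := by
    intro h
    rw [h] at hwS'
    simp at hwS'
  set m := l w with hm
  have hmpos : 0 < m := by
    rcases lt_or_eq_of_le (lnonneg w) with h | h
    · exact h
    · exact absurd ((hdef w).mp h.symm) hw0
  have h1len : (1:ℝ) ≤ Real.sqrt n := by
    rw [Real.one_le_sqrt]
    exact_mod_cast hn
  refine ⟨m, Real.sqrt n * m, hmpos, ?_, ?_, ?_⟩
  · nlinarith
  · rw [mul_div_assoc, div_self (ne_of_gt hmpos), mul_one]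
  · intro x
    by_cases hx0 : x = 0
    · subst hx0
      simp [l0]
    · have hsumpos : 0 < ∑ i, x i ^ 2 := by
        have hnz : ∃ i, x i ≠ 0 := by
          by_contra h
          push_neg at h
          exact hx0 (funext h)
        obtain ⟨i, hi⟩ := hnz
        refine Finset.sum_pos' (fun j _ => by positivity) ⟨i, Finset.mem_univ i, by positivity⟩
      set t := Real.sqrt (∑ i, x i ^ 2) with ht
      have htpos : 0 < t := Real.sqrt_pos.2 hsumpos
      have ht2 : t ^ 2 = ∑ i, x i ^ 2 := Real.sq_sqrt hsumpos.le
      set u : Fin n → ℝ := t⁻¹ • x with hu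
      have huS : ∑ i, u i ^ 2 = 1 := by
        simp only [hu, Pi.smul_apply, smul_eq_mul, mul_pow, ← Finset.mul_sum]
        rw [← ht2]
        field_simp
      have hxu : x = t • u := by
        rw [hu, smul_smul, mul_inv_cancel₀ (ne_of_gt htpos), one_smul]
      have hlxu : l x = t * l u := by
        rw [hxu, lscale t u htpos.le]
      constructor
      · have h1 : m ≤ l u := hwmin huS
        rw [hlxu]
        nlinarith
      · have h2 : l u ≤ Real.sqrt n * m := pair u w huS hwS'
        rw [hlxu]
        nlinarith [Real.sqrt_nonneg (n:ℝ)]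
end

section
/- Let l be a symmetric norm on R^n, let V in R^n be a vector whose nonzero coordinates consist of disjoint groups of equal values (level vector), let V_i be the vector supported on the i-th group with b_i nonzero coordinates all equal to alpha^i, and let hat{V}_i be V_i with only hat{b}_i <= b_i of those coordinates kept nonzero. Then l evaluated at the vector obtained from V by replacing group i with hat{V}_i is at least (hat{b}_i / b_i) * l(V). -/
section Aux
variable {n : ℕ} (l : (Fin n → ℝ) → ℝ)
    (htri : ∀ x y, l (x + y) ≤ l x + l y)
    (hhom : ∀ (c : ℝ) x, l (c • x) = |c| * l x)
    (hsign : ∀ x, l (fun i => |x i|) = l x)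

include hhom in
theorem sn_zero : l 0 = 0 := by
  have := hhom 0 0
  simpa using this

include htri hhom in
theorem sn_sum_le {ι : Type*} (s : Finset ι) (f : ι → (Fin n → ℝ)) :
    l (∑ k ∈ s, f k) ≤ ∑ k ∈ s, l (f k) := by
  classical
  induction s using Finset.induction with
  | empty => simp [sn_zero l hhom]
  | insert _ _ hx ih =>
    rw [Finset.sum_insert hx, Finset.sum_insert hx]
    exact le_trans (htri _ _) (by linarith)

include htri hhom hsign in
theorem sn_mono_single (x y : Fin n → ℝ) (j : Fin n)
    (h : ∀ i, i ≠ j → x i = y i) (hj : |x j| ≤ |y j|) : l x ≤ l y := by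
  classical
  by_cases hzero : y j = 0
  · have hxj : x j = 0 := by
      have : |x j| ≤ 0 := by simpa [hzero] using hj
      simpa using le_antisymm this (abs_nonneg _)
    have : x = y := by
      funext i
      by_cases hi : i = j
      · simp [hi, hxj, hzero]
      · exact h i hi
    simp [this]
  · set c : ℝ := |x j| / |y j| with hc
    have hyp : (0:ℝ) < |y j| := abs_pos.mpr hzero
    have hc0 : 0 ≤ c := div_nonneg (abs_nonneg _) (abs_nonneg _)
    have hc1 : c ≤ 1 := (div_le_one hyp).mpr hj
    set u : Fin n → ℝ := fun i => |y i| with hu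
    set u' : Fin n → ℝ := Function.update u j (-|y j|) with hu'
    have key : (fun i => |x i|) = ((1+c)/2) • u + ((1-c)/2) • u' := by
      funext i
      by_cases hi : i = j
      · subst hi
        simp only [Pi.add_apply, Pi.smul_apply, smul_eq_mul, hu', Function.update_self]
        have hcy : c * |y i| = |x i| := by
          rw [hc, div_mul_cancel₀ _ hyp.ne']
        rw [← hcy]; ring
      · simp only [Pi.add_apply, Pi.smul_apply, smul_eq_mul, hu',
          Function.update_of_ne hi, hu, h i hi]
        ring
    have hlu : l u = l y := hsign y
    have hlu' : l u' = l y := by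
      have : (fun i => |u' i|) = u := by
        funext i
        by_cases hi : i = j
        · subst hi; simp [hu', hu]
        · simp [hu', Function.update_of_ne hi, hu, abs_abs]
      calc l u' = l (fun i => |u' i|) := (hsign u').symm
        _ = l u := by rw [this]
        _ = l y := hlu
    calc l x = l (fun i => |x i|) := (hsign x).symm
      _ = l (((1+c)/2) • u + ((1-c)/2) • u') := by rw [key]
      _ ≤ l (((1+c)/2) • u) + l (((1-c)/2) • u') := htri _ _
      _ = |(1+c)/2| * l u + |(1-c)/2| * l u' := by rw [hhom, hhom]
      _ = ((1+c)/2) * l y + ((1-c)/2) * l y := by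
          rw [hlu, hlu', abs_of_nonneg (by linarith), abs_of_nonneg (by linarith)]
      _ = l y := by ring

include htri hhom hsign in
theorem sn_mono (x y : Fin n → ℝ) (h : ∀ j, |x j| ≤ |y j|) : l x ≤ l y := by
  classical
  suffices H : ∀ T : Finset (Fin n), ∀ x : Fin n → ℝ, (∀ j, |x j| ≤ |y j|) →
      (∀ j ∉ T, x j = y j) → l x ≤ l y by
    exact H Finset.univ x h (by simp)
  intro T
  induction T using Finset.induction with
  | empty =>
    intro x hx hout
    have : x = y := funext fun j => hout j (by simp)
    simp [this]
  | @insert a T ha ih =>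
    intro x hx hout
    set z : Fin n → ℝ := Function.update x a (y a) with hz
    have h1 : l x ≤ l z :=
      sn_mono_single l htri hhom hsign x z a
        (fun i hi => by simp [hz, Function.update_of_ne hi])
        (by simpa [hz] using hx a)
    refine le_trans h1 (ih z (fun j => ?_) (fun j hj => ?_))
    · by_cases hja : j = a
      · simp [hz, hja]
      · simpa [hz, Function.update_of_ne hja] using hx j
    · by_cases hja : j = a
      · simp [hz, hja]
      · have : j ∉ insert a T := by simp [hja, hj]
        simp [hz, Function.update_of_ne hja, hout j this]

end Aux


/-- Bucket approximation lower bound: for a symmetric norm `l` and a level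
vector `V` (value `α^(i+1)` on the `i`-th group `B i`, groups pairwise
disjoint, zero elsewhere), replacing the `i₀`-th group by a sub-group `S ⊆ B i₀`
(keeping `S.card` of the `(B i₀).card` nonzero coordinates) yields a vector `W`
with `l W ≥ (S.card / (B i₀).card) * l V`. -/
theorem bucket_approximation {n t : ℕ} (l : (Fin n → ℝ) → ℝ)
    (htri : ∀ x y, l (x + y) ≤ l x + l y)
    (hhom : ∀ (c : ℝ) x, l (c • x) = |c| * l x)
    (hdef : ∀ x, l x = 0 ↔ x = 0)
    (hperm : ∀ (σ : Equiv.Perm (Fin n)) x, l (fun i => x (σ i)) = l x)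
    (hsign : ∀ x, l (fun i => |x i|) = l x)
    (α : ℝ) (hα : 1 < α)
    (B : Fin t → Finset (Fin n))
    (hdisj : ∀ i i' : Fin t, i ≠ i' → Disjoint (B i) (B i'))
    (V : Fin n → ℝ)
    (hV0 : ∀ j : Fin n, (∀ i : Fin t, j ∉ B i) → V j = 0)
    (hVlevel : ∀ i : Fin t, ∀ j ∈ B i, V j = α ^ ((i : ℕ) + 1))
    (i₀ : Fin t) (hne : (B i₀).Nonempty)
    (S : Finset (Fin n)) (hS : S ⊆ B i₀)
    (W : Fin n → ℝ)
    (hWout : ∀ j : Fin n, j ∉ B i₀ → W j = V j)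
    (hWin : ∀ j ∈ S, W j = α ^ ((i₀ : ℕ) + 1))
    (hWzero : ∀ j ∈ B i₀, j ∉ S → W j = 0) :
    ((S.card : ℝ) / (B i₀).card) * l V ≤ l W := by
  classical
  set b := (B i₀).card with hb
  have hbpos : 0 < b := Finset.card_pos.mpr hne
  haveI : NeZero b := ⟨hbpos.ne'⟩
  set s := S.card with hs
  have hsb : s ≤ b := Finset.card_le_card hS
  set c : ℝ := (s : ℝ) / b with hc
  have hbR : (0:ℝ) < b := by exact_mod_cast hbpos
  have hc0 : 0 ≤ c := by positivity
  have hc1 : c ≤ 1 := by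
    rw [hc, div_le_one hbR]; exact_mod_cast hsb
  have hαpos : (0:ℝ) < α := lt_trans one_pos hα
  have hαpow : (0:ℝ) < α ^ ((i₀:ℕ)+1) := pow_pos hαpos _
  set X : Fin n → ℝ := fun j => if j ∈ B i₀ then c * α ^ ((i₀:ℕ)+1) else V j with hX
  -- Step 1: c * l V ≤ l X
  have step1 : c * l V ≤ l X := by
    have hm : l (c • V) ≤ l X := by
      apply sn_mono l htri hhom hsign
      intro j
      by_cases hj : j ∈ B i₀
      · have hv := hVlevel i₀ j hj
        simp [hX, hj, hv, abs_mul, abs_of_nonneg hc0, abs_of_nonneg hαpow.le]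
      · simp only [hX, if_neg hj, Pi.smul_apply, smul_eq_mul, abs_mul, abs_of_nonneg hc0]
        nlinarith [abs_nonneg (V j)]
    rwa [hhom, abs_of_nonneg hc0] at hm
  -- averaging setup
  set e : Fin b ≃ {x // x ∈ B i₀} := (B i₀).equivFin.symm with he
  set σ : Fin b → Equiv.Perm (Fin n) := fun k =>
    Equiv.Perm.ofSubtype ((e.symm.trans (Equiv.addRight k)).trans e) with hσ
  have hWsum : ∑ j' ∈ B i₀, W j' = (s : ℝ) * α ^ ((i₀:ℕ)+1) := by
    rw [← Finset.sum_subset hS (fun j hj hjs => hWzero j hj hjs)]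
    rw [Finset.sum_congr rfl (fun j hj => hWin j hj), Finset.sum_const, nsmul_eq_mul, hs]
  have hkey : ∑ k : Fin b, (fun j => W (σ k j)) = (b : ℝ) • X := by
    funext j
    rw [Finset.sum_apply]
    by_cases hj : j ∈ B i₀
    · have hσin : ∀ k : Fin b, σ k j = ↑(e (e.symm ⟨j, hj⟩ + k)) := by
        intro k
        rw [hσ]
        rw [Equiv.Perm.ofSubtype_apply_of_mem _ hj]
        rfl
      calc ∑ k : Fin b, W (σ k j)
          = ∑ k : Fin b, W (e (Equiv.addLeft (e.symm ⟨j, hj⟩) k)) := by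
            refine Finset.sum_congr rfl fun k _ => ?_
            rw [hσin k]; rfl
        _ = ∑ m : Fin b, W (e m) := Equiv.sum_comp (Equiv.addLeft (e.symm ⟨j, hj⟩)) (fun m => W ↑(e m))
        _ = ∑ x : {x // x ∈ B i₀}, W x := Equiv.sum_comp e (fun x => W ↑x)
        _ = ∑ j' ∈ B i₀, W j' := Finset.sum_coe_sort _ _
        _ = (s : ℝ) * α ^ ((i₀:ℕ)+1) := hWsum
        _ = ((b : ℝ) • X) j := by
            simp only [Pi.smul_apply, smul_eq_mul, hX, if_pos hj, hc]
            field_simp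
    · have hσout : ∀ k : Fin b, σ k j = j := by
        intro k
        rw [hσ]
        exact Equiv.Perm.ofSubtype_apply_of_not_mem _ hj
      simp only [hσout]
      rw [Finset.sum_const, Finset.card_univ, Fintype.card_fin, nsmul_eq_mul]
      simp [hX, hj, hWout j hj]
  -- Step 2: l X ≤ l W
  have step2 : l X ≤ l W := by
    have h1 : l ((b : ℝ) • X) ≤ ∑ k : Fin b, l (fun j => W (σ k j)) := by
      rw [← hkey]; exact sn_sum_le l htri hhom _ _
    have h2 : ∑ k : Fin b, l (fun j => W (σ k j)) = (b : ℝ) * l W := by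
      rw [Finset.sum_congr rfl fun k _ => hperm (σ k) W]
      rw [Finset.sum_const, Finset.card_univ, Fintype.card_fin, nsmul_eq_mul]
    rw [hhom, abs_of_nonneg hbR.le, h2] at h1
    exact le_of_mul_le_mul_left h1 hbR
  calc c * l V ≤ l X := step1
    _ ≤ l W := step2
end

section
/- For a uniformly random point x on the Euclidean unit sphere S^{n-1}, with probability greater than 2/3, more than n/2 of the coordinates of x satisfy |x_i| > 1/(K*sqrt(n)), where K is a suitable universal constant. -/
open MeasureTheory Metric
open scoped ENNReal

/-- The uniform (Haar) probability measure on the unit Euclidean sphere in `ℝ^n`. -/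
noncomputable def uniformSphere (n : ℕ) :
    Measure (sphere (0 : EuclideanSpace ℝ (Fin n)) 1) :=
  ((volume : Measure (EuclideanSpace ℝ (Fin n))).toSphere Set.univ)⁻¹ •
    (volume : Measure (EuclideanSpace ℝ (Fin n))).toSphere

open scoped Pointwise

namespace ManyLargeCoords

noncomputable section

abbrev E (n : ℕ) := EuclideanSpace ℝ (Fin n)

lemma measurable_coord (n : ℕ) (i : Fin n) : Measurable fun x : E n => x i :=
  (measurable_pi_apply i).comp (MeasurableEquiv.toLp 2 (Fin n → ℝ)).symm.measurable

lemma measurable_sum_sq (m : ℕ) : Measurable fun z : Fin m → ℝ => ∑ k, (z k)^2 :=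
  Finset.measurable_sum _ fun k _ => (measurable_pi_apply k).pow_const 2

lemma pi_sum_sq_eq_ball (m : ℕ) {r : ℝ} (hr : 0 < r) :
    (volume : Measure (Fin m → ℝ)) {z | ∑ k, (z k)^2 < r^2} =
      volume (ball (0 : E m) r) := by
  have hmeas : MeasurableSet {z : Fin m → ℝ | ∑ k, (z k)^2 < r^2} :=
    measurableSet_lt (measurable_sum_sq m) measurable_const
  rw [← (EuclideanSpace.volume_preserving_symm_measurableEquiv_toLp (Fin m)).measure_preimage
    hmeas.nullMeasurableSet]
  congr 1
  ext x
  simp only [Set.mem_preimage, Set.mem_setOf_eq, mem_ball_zero_iff, EuclideanSpace.norm_eq,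
    Real.norm_eq_abs, sq_abs]
  rw [Real.sqrt_lt' hr]
  rfl

lemma pi_split (m : ℕ) (i : Fin (m+1)) {W : Set (ℝ × (Fin m → ℝ))} (hW : MeasurableSet W) :
    (volume : Measure (Fin (m+1) → ℝ))
        ((MeasurableEquiv.piFinSuccAbove (fun _ => ℝ) i) ⁻¹' W)
      = ((volume : Measure ℝ).prod volume) W :=
  (volume_preserving_piFinSuccAbove (fun _ : Fin (m+1) => ℝ) i).measure_preimage
    hW.nullMeasurableSet

lemma slab_upper (m : ℕ) (i : Fin (m+1)) {t : ℝ} (ht : 0 < t) :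
    volume {x : E (m+1) | |x i| ≤ t ∧ ‖x‖ < 1} ≤
      ENNReal.ofReal (2*t) * volume (ball (0 : E m) 1) := by
  have hW : MeasurableSet {p : ℝ × (Fin m → ℝ) | |p.1| ≤ t ∧ p.1^2 + ∑ k, (p.2 k)^2 < 1} := by
    rw [Set.setOf_and]
    exact (measurableSet_le measurable_fst.abs measurable_const).inter
      (measurableSet_lt ((measurable_fst.pow_const 2).add
        ((measurable_sum_sq m).comp measurable_snd)) measurable_const)
  have h1 : volume {x : E (m+1) | |x i| ≤ t ∧ ‖x‖ < 1}
      = (volume : Measure (Fin (m+1) → ℝ)) {y | |y i| ≤ t ∧ ∑ j, (y j)^2 < 1} := by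
    have hm : MeasurableSet {y : Fin (m+1) → ℝ | |y i| ≤ t ∧ ∑ j, (y j)^2 < 1} := by
      rw [Set.setOf_and]
      exact (measurableSet_le (measurable_pi_apply i).abs measurable_const).inter
        (measurableSet_lt (measurable_sum_sq _) measurable_const)
    rw [← (EuclideanSpace.volume_preserving_symm_measurableEquiv_toLp (Fin (m+1))).measure_preimage
      hm.nullMeasurableSet]
    congr 1
    ext x
    simp only [Set.mem_preimage, Set.mem_setOf_eq, EuclideanSpace.norm_eq,
      Real.norm_eq_abs, sq_abs]
    rw [Real.sqrt_lt' one_pos, one_pow]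
    rfl
  have h2 : (volume : Measure (Fin (m+1) → ℝ)) {y | |y i| ≤ t ∧ ∑ j, (y j)^2 < 1}
      = ((volume : Measure ℝ).prod volume)
          {p : ℝ × (Fin m → ℝ) | |p.1| ≤ t ∧ p.1^2 + ∑ k, (p.2 k)^2 < 1} := by
    rw [← pi_split m i hW]
    congr 1
    ext y
    simp only [Set.mem_preimage, Set.mem_setOf_eq]
    rw [Fin.sum_univ_succAbove (fun j => (y j)^2) i]
    exact Iff.rfl
  calc volume {x : E (m+1) | |x i| ≤ t ∧ ‖x‖ < 1}
      = ((volume : Measure ℝ).prod volume)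
          {p : ℝ × (Fin m → ℝ) | |p.1| ≤ t ∧ p.1^2 + ∑ k, (p.2 k)^2 < 1} := h1.trans h2
    _ ≤ ((volume : Measure ℝ).prod volume)
          (Set.Icc (-t) t ×ˢ {z : Fin m → ℝ | ∑ k, (z k)^2 < 1}) := by
        apply measure_mono
        rintro ⟨a, z⟩ ⟨ha, hz⟩
        refine ⟨Set.mem_Icc.mpr (abs_le.mp ha), ?_⟩
        have : (0:ℝ) ≤ a^2 := sq_nonneg a
        simp only [Set.mem_setOf_eq]
        linarith
    _ = ENNReal.ofReal (2*t) * volume (ball (0 : E m) 1) := by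
        rw [Measure.prod_prod, Real.volume_Icc]
        congr 1
        · congr 1; ring
        · have h : {z : Fin m → ℝ | ∑ k, (z k)^2 < 1} = {z | ∑ k, (z k)^2 < 1^2} := by
            norm_num
          rw [h, pi_sum_sq_eq_ball m one_pos]

lemma ball_lower (m : ℕ) {s : ℝ} (hs0 : 0 < s) (hs1 : s < 1) :
    ENNReal.ofReal (2*s) * volume (ball (0 : E m) (Real.sqrt (1 - s^2))) ≤
      volume (ball (0 : E (m+1)) 1) := by
  have h1s : (0:ℝ) < 1 - s^2 := by nlinarith
  have hr : 0 < Real.sqrt (1 - s^2) := Real.sqrt_pos.mpr h1s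
  have hrect : MeasurableSet (Set.Ioo (-s) s ×ˢ {z : Fin m → ℝ | ∑ k, (z k)^2 < 1 - s^2}) :=
    measurableSet_Ioo.prod (measurableSet_lt (measurable_sum_sq m) measurable_const)
  have hL : ENNReal.ofReal (2*s) * volume (ball (0 : E m) (Real.sqrt (1 - s^2)))
      = (volume : Measure (Fin (m+1) → ℝ))
          ((MeasurableEquiv.piFinSuccAbove (fun _ => ℝ) 0) ⁻¹'
            (Set.Ioo (-s) s ×ˢ {z : Fin m → ℝ | ∑ k, (z k)^2 < 1 - s^2})) := by
    rw [pi_split m 0 hrect, Measure.prod_prod, Real.volume_Ioo]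
    congr 1
    · congr 1; ring
    · rw [← pi_sum_sq_eq_ball m hr, Real.sq_sqrt h1s.le]
  rw [hL]
  have hone : volume (ball (0 : E (m+1)) 1)
      = (volume : Measure (Fin (m+1) → ℝ)) {y | ∑ j, (y j)^2 < 1} := by
    have h : {y : Fin (m+1) → ℝ | ∑ j, (y j)^2 < 1} = {y | ∑ j, (y j)^2 < 1^2} := by norm_num
    rw [h, pi_sum_sq_eq_ball (m+1) one_pos]
  rw [hone]
  apply measure_mono
  intro y hy
  obtain ⟨hy1, hy2⟩ := hy
  have h0 : (y 0)^2 < s^2 := sq_lt_sq' hy1.1 hy1.2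
  have h2 : ∑ k, (y ((0 : Fin (m+1)).succAbove k))^2 < 1 - s^2 := hy2
  simp only [Set.mem_setOf_eq]
  rw [Fin.sum_univ_succAbove (fun j => (y j)^2) 0]
  linarith

lemma ball_scale (m : ℕ) {r : ℝ} (h0 : 0 < r) :
    ENNReal.ofReal (r^m) * volume (ball (0 : E m) 1) ≤ volume (ball (0 : E m) r) := by
  cases m with
  | zero =>
      have hz : ∀ x : E 0, x = 0 := fun x => Subsingleton.elim _ _
      have h : ball (0 : E 0) r = ball (0 : E 0) 1 := by
        ext x
        simp [mem_ball, hz x, h0]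
      rw [pow_zero, h]
      simp
  | succ k =>
      haveI : Nontrivial (E (k+1)) := by
        refine ⟨EuclideanSpace.single 0 1, 0, fun h => ?_⟩
        have h0' := congrArg (fun v : E (k+1) => v 0) h
        simp [EuclideanSpace.single_apply] at h0'
      rw [Measure.addHaar_ball volume (0 : E (k+1)) h0.le, finrank_euclideanSpace_fin]

lemma markov (m : ℕ) {t : ℝ} (ht : 0 < t) :
    volume {x : E (m+1) | ‖x‖ < 1 ∧
        (((m+1 : ℕ)) : ℝ) ≤ 2 * ((Finset.univ.filter fun i : Fin (m+1) => |x i| ≤ t).card : ℝ)} ≤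
      ENNReal.ofReal (4*t) * volume (ball (0 : E m) 1) := by
  classical
  set N := m + 1 with hN
  set C := {x : E N | ‖x‖ < 1 ∧
      ((N : ℕ) : ℝ) ≤ 2 * ((Finset.univ.filter fun i : Fin N => |x i| ≤ t).card : ℝ)} with hC
  have hS : ∀ i : Fin N, MeasurableSet {x : E N | |x i| ≤ t} := fun i =>
    measurableSet_le (measurable_coord N i).abs measurable_const
  set F : E N → ℝ≥0∞ :=
    fun x => ∑ i : Fin N, Set.indicator {x : E N | |x i| ≤ t} (fun _ => 1) x with hF
  have hFmeas : Measurable F :=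
    Finset.measurable_sum _ fun i _ => Measurable.indicator measurable_const (hS i)
  have hFcard : ∀ x, F x = ((Finset.univ.filter fun i : Fin N => |x i| ≤ t).card : ℝ≥0∞) := by
    intro x
    rw [Finset.card_filter]
    push_cast
    refine Finset.sum_congr rfl fun i _ => ?_
    by_cases h : |x i| ≤ t <;> simp [Set.indicator_apply, h]
  have step1 : ((N : ℕ) : ℝ≥0∞) * volume C ≤ ∫⁻ x in C, 2 * F x := by
    rw [← setLIntegral_const C ((N : ℕ) : ℝ≥0∞)]
    refine setLIntegral_mono (hFmeas.const_mul 2) fun x hx => ?_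
    rw [hFcard]
    have h2 : ((N:ℕ):ℝ) ≤ 2 * ((Finset.univ.filter fun i : Fin N => |x i| ≤ t).card : ℝ) := hx.2
    have h3 : (N:ℕ) ≤ 2 * (Finset.univ.filter fun i : Fin N => |x i| ≤ t).card := by
      exact_mod_cast h2
    calc ((N:ℕ):ℝ≥0∞) ≤ ((2 * (Finset.univ.filter fun i : Fin N => |x i| ≤ t).card : ℕ) : ℝ≥0∞) :=
          by exact_mod_cast h3
      _ = 2 * ((Finset.univ.filter fun i : Fin N => |x i| ≤ t).card : ℝ≥0∞) := by push_cast; ring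
  have step2 : ∫⁻ x in C, 2 * F x ≤ ∫⁻ x in ball (0 : E N) 1, 2 * F x :=
    lintegral_mono_set fun x hx => mem_ball_zero_iff.mpr hx.1
  have step3 : ∫⁻ x in ball (0 : E N) 1, 2 * F x
      = 2 * ∑ i : Fin N, volume ({x : E N | |x i| ≤ t} ∩ ball (0 : E N) 1) := by
    rw [lintegral_const_mul 2 hFmeas]
    congr 1
    rw [hF, lintegral_finset_sum _ fun i _ => Measurable.indicator measurable_const (hS i)]
    refine Finset.sum_congr rfl fun i _ => ?_
    rw [lintegral_indicator (hS i), setLIntegral_one, Measure.restrict_apply (hS i)]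
  have step4 : ∀ i : Fin N, volume ({x : E N | |x i| ≤ t} ∩ ball (0 : E N) 1)
      ≤ ENNReal.ofReal (2*t) * volume (ball (0 : E m) 1) := by
    intro i
    have h : {x : E N | |x i| ≤ t} ∩ ball (0 : E N) 1 = {x : E N | |x i| ≤ t ∧ ‖x‖ < 1} := by
      ext x
      simp [mem_ball_zero_iff, Set.mem_setOf_eq, Set.mem_inter_iff]
    rw [h]
    exact slab_upper m i ht
  have hall : ((N : ℕ) : ℝ≥0∞) * volume C
      ≤ ((N : ℕ) : ℝ≥0∞) * (ENNReal.ofReal (4*t) * volume (ball (0 : E m) 1)) := by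
    calc ((N : ℕ) : ℝ≥0∞) * volume C ≤ ∫⁻ x in C, 2 * F x := step1
      _ ≤ ∫⁻ x in ball (0 : E N) 1, 2 * F x := step2
      _ = 2 * ∑ i : Fin N, volume ({x : E N | |x i| ≤ t} ∩ ball (0 : E N) 1) := step3
      _ ≤ 2 * ∑ _i : Fin N, ENNReal.ofReal (2*t) * volume (ball (0 : E m) 1) := by
          exact mul_le_mul_right (Finset.sum_le_sum fun i _ => step4 i) 2
      _ = ((N : ℕ) : ℝ≥0∞) * (ENNReal.ofReal (4*t) * volume (ball (0 : E m) 1)) := by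
          rw [Finset.sum_const, Finset.card_univ, Fintype.card_fin, nsmul_eq_mul]
          have h24 : (2 : ℝ≥0∞) * ENNReal.ofReal (2*t) = ENNReal.ofReal (4*t) := by
            rw [show (2:ℝ≥0∞) = ENNReal.ofReal 2 by norm_num,
              ← ENNReal.ofReal_mul (by norm_num)]
            ring_nf
          rw [← h24]
          ring
  have hN0 : ((N : ℕ) : ℝ≥0∞) ≠ 0 := by
    simp [hN]
  have hNt : ((N : ℕ) : ℝ≥0∞) ≠ ⊤ := ENNReal.natCast_ne_top N
  exact (ENNReal.mul_le_mul_iff_right hN0 hNt).mp hall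

end

end ManyLargeCoords

set_option maxHeartbeats 2000000 in
/-- There is a universal constant `K` such that for a uniformly random point
`x` on `S^{n-1}`, with probability greater than `2/3`, more than `n/2` of the
coordinates of `x` satisfy `|x i| > 1/(K √n)`. -/
theorem many_large_coordinates_on_sphere :
    ∃ K : ℝ, 0 < K ∧ ∀ n : ℕ, 0 < n →
      (2 / 3 : ℝ≥0∞) <
        uniformSphere n
          {x | (n : ℝ) / 2 <
            ((Finset.univ.filter fun i : Fin n =>
              1 / (K * Real.sqrt n) < |(x : EuclideanSpace ℝ (Fin n)) i|).card : ℝ)} := by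
  classical
  refine ⟨100, by norm_num, ?_⟩
  intro n hn
  obtain ⟨m, rfl⟩ := Nat.exists_eq_succ_of_ne_zero hn.ne'
  have hNpos : (0:ℝ) < ((m+1 : ℕ) : ℝ) := by positivity
  have hsqpos : (0:ℝ) < Real.sqrt ((m+1 : ℕ) : ℝ) := Real.sqrt_pos.mpr hNpos
  set t : ℝ := 1 / (100 * Real.sqrt ((m+1 : ℕ) : ℝ)) with htdef
  have ht : 0 < t := by rw [htdef]; positivity
  set A : Set (sphere (0 : EuclideanSpace ℝ (Fin (m+1))) 1) :=
    {x | ((m+1 : ℕ) : ℝ) / 2 <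
      ((Finset.univ.filter fun i : Fin (m+1) =>
        t < |(x : EuclideanSpace ℝ (Fin (m+1))) i|).card : ℝ)} with hAdef
  -- measurability of A
  have hAmeas : MeasurableSet A := by
    have hcard : Measurable fun x : sphere (0 : EuclideanSpace ℝ (Fin (m+1))) 1 =>
        (Finset.univ.filter fun i : Fin (m+1) =>
          t < |(x : EuclideanSpace ℝ (Fin (m+1))) i|).card := by
      simp only [Finset.card_filter]
      refine Finset.measurable_sum _ fun i _ =>
        Measurable.ite ?_ measurable_const measurable_const
      exact measurableSet_lt measurable_const
        ((ManyLargeCoords.measurable_coord (m+1) i).comp measurable_subtype_coe).abs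
    exact hcard (MeasurableSet.of_discrete
      (s := {c : ℕ | ((m+1 : ℕ) : ℝ) / 2 < (c : ℝ)}))
  -- basic facts
  have hVm0 : volume (ball (0 : EuclideanSpace ℝ (Fin m)) 1) ≠ 0 :=
    (measure_ball_pos volume 0 one_pos).ne'
  have hVmt : volume (ball (0 : EuclideanSpace ℝ (Fin m)) 1) ≠ ⊤ := measure_ball_lt_top.ne
  have hVB0 : volume (ball (0 : EuclideanSpace ℝ (Fin (m+1))) 1) ≠ 0 :=
    (measure_ball_pos volume 0 one_pos).ne'
  have hVBt : volume (ball (0 : EuclideanSpace ℝ (Fin (m+1))) 1) ≠ ⊤ := measure_ball_lt_top.ne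
  have hN0' : ((m+1 : ℕ) : ℝ≥0∞) ≠ 0 := by exact_mod_cast Nat.succ_ne_zero m
  have hNt' : ((m+1 : ℕ) : ℝ≥0∞) ≠ ⊤ := ENNReal.natCast_ne_top _
  have htou : (volume : Measure (EuclideanSpace ℝ (Fin (m+1)))).toSphere Set.univ
      = ((m+1 : ℕ) : ℝ≥0∞) * volume (ball (0 : EuclideanSpace ℝ (Fin (m+1))) 1) := by
    rw [Measure.toSphere_apply_univ, finrank_euclideanSpace_fin]
  haveI hprob : IsProbabilityMeasure (uniformSphere (m+1)) := by
    constructor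
    rw [uniformSphere, Measure.smul_apply, smul_eq_mul, ENNReal.inv_mul_cancel]
    · rw [htou]; exact mul_ne_zero hN0' hVB0
    · rw [htou]; exact ENNReal.mul_ne_top hNt' hVBt
  -- the cone over Aᶜ is contained in the Markov set
  have hconesub : (Set.Ioo (0:ℝ) 1 • ((↑) '' Aᶜ : Set (EuclideanSpace ℝ (Fin (m+1)))))
      ⊆ {x : EuclideanSpace ℝ (Fin (m+1)) | ‖x‖ < 1 ∧
          (((m+1 : ℕ)) : ℝ) ≤
            2 * ((Finset.univ.filter fun i : Fin (m+1) => |x i| ≤ t).card : ℝ)} := by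
    rintro x hx
    rw [Set.mem_smul] at hx
    obtain ⟨r, hr, y, hy, rfl⟩ := hx
    obtain ⟨v, hv, rfl⟩ := hy
    rw [Set.mem_Ioo] at hr
    have hnv : ‖(v : EuclideanSpace ℝ (Fin (m+1)))‖ = 1 := norm_eq_of_mem_sphere v
    simp only [Set.mem_setOf_eq]
    constructor
    · rw [norm_smul, hnv, Real.norm_eq_abs, abs_of_pos hr.1, mul_one]
      exact hr.2
    · have hv' : ((Finset.univ.filter fun i : Fin (m+1) =>
          t < |(v : EuclideanSpace ℝ (Fin (m+1))) i|).card : ℝ) ≤ ((m+1 : ℕ) : ℝ) / 2 := by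
        have hv2 := hv
        simp only [hAdef, Set.mem_compl_iff, Set.mem_setOf_eq, not_lt] at hv2
        exact hv2
      have hsplit := Finset.card_filter_add_card_filter_not
        (s := (Finset.univ : Finset (Fin (m+1))))
        (p := fun i => t < |(v : EuclideanSpace ℝ (Fin (m+1))) i|)
      rw [Finset.card_univ, Fintype.card_fin] at hsplit
      have hsub : (Finset.univ.filter fun i : Fin (m+1) =>
            ¬ t < |(v : EuclideanSpace ℝ (Fin (m+1))) i|)
          ⊆ Finset.univ.filter fun i : Fin (m+1) =>
            |(r • (v : EuclideanSpace ℝ (Fin (m+1)))) i| ≤ t := by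
        intro i hi
        rw [Finset.mem_filter, not_lt] at hi
        rw [Finset.mem_filter]
        refine ⟨Finset.mem_univ _, ?_⟩
        have hco : (r • (v : EuclideanSpace ℝ (Fin (m+1)))) i
            = r * (v : EuclideanSpace ℝ (Fin (m+1))) i := rfl
        rw [hco, abs_mul, abs_of_pos hr.1]
        calc r * |(v : EuclideanSpace ℝ (Fin (m+1))) i|
            ≤ 1 * |(v : EuclideanSpace ℝ (Fin (m+1))) i| :=
              mul_le_mul_of_nonneg_right hr.2.le (abs_nonneg _)
          _ ≤ t := by rw [one_mul]; exact hi.2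
      have hcardle := Finset.card_le_card hsub
      have h1 : ((Finset.univ.filter fun i : Fin (m+1) =>
            t < |(v : EuclideanSpace ℝ (Fin (m+1))) i|).card : ℝ)
          + ((Finset.univ.filter fun i : Fin (m+1) =>
            ¬ t < |(v : EuclideanSpace ℝ (Fin (m+1))) i|).card : ℝ) = ((m+1 : ℕ) : ℝ) := by
        exact_mod_cast hsplit
      have h2 : ((Finset.univ.filter fun i : Fin (m+1) =>
            ¬ t < |(v : EuclideanSpace ℝ (Fin (m+1))) i|).card : ℝ)
          ≤ ((Finset.univ.filter fun i : Fin (m+1) =>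
            |(r • (v : EuclideanSpace ℝ (Fin (m+1)))) i| ≤ t).card : ℝ) := by
        exact_mod_cast hcardle
      linarith
  have hcone : volume (Set.Ioo (0:ℝ) 1 • ((↑) '' Aᶜ : Set (EuclideanSpace ℝ (Fin (m+1)))))
      ≤ ENNReal.ofReal (4*t) * volume (ball (0 : EuclideanSpace ℝ (Fin m)) 1) :=
    le_trans (measure_mono hconesub) (ManyLargeCoords.markov m ht)
  -- the geometric lower bound on the volume of the unit ball
  set s : ℝ := 1 / (2 * Real.sqrt ((m+1 : ℕ) : ℝ)) with hsdef
  have hs0 : 0 < s := by rw [hsdef]; positivity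
  have hsqrt1 : (1:ℝ) ≤ Real.sqrt ((m+1 : ℕ) : ℝ) := by
    rw [show (1:ℝ) = Real.sqrt 1 by simp]
    exact Real.sqrt_le_sqrt (by exact_mod_cast Nat.succ_le_succ (Nat.zero_le m))
  have hs1 : s < 1 := by
    rw [hsdef, div_lt_one (by positivity)]
    nlinarith
  have h1s : (0:ℝ) < 1 - s^2 := by nlinarith
  have hr0 : 0 < Real.sqrt (1 - s^2) := Real.sqrt_pos.mpr h1s
  have hs2 : s^2 ≤ 1 / (4 * ((m+1 : ℕ) : ℝ)) := by
    rw [hsdef, div_pow, one_pow, mul_pow, Real.sq_sqrt hNpos.le]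
    norm_num
  have hrm : (3:ℝ)/4 ≤ (Real.sqrt (1 - s^2))^m := by
    have hu0 : (0:ℝ) ≤ 1 - s^2 := h1s.le
    have hu1 : 1 - s^2 ≤ 1 := by nlinarith
    have hsq' : 1 - s^2 ≤ Real.sqrt (1 - s^2) :=
      (Real.le_sqrt hu0 hu0).mpr (by nlinarith)
    have hpow : (1 - s^2)^m ≤ (Real.sqrt (1 - s^2))^m := pow_le_pow_left₀ hu0 hsq' m
    have hbern : 1 - (m:ℝ) * s^2 ≤ (1 - s^2)^m := by
      have h := one_add_mul_le_pow (a := -s^2) (by nlinarith) m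
      have hrw1 : (1:ℝ) + (m:ℝ) * (-s^2) = 1 - (m:ℝ) * s^2 := by ring
      have hrw2 : (1:ℝ) + -s^2 = 1 - s^2 := by ring
      rw [hrw1, hrw2] at h
      exact h
    have hms : (m:ℝ) * s^2 ≤ 1/4 := by
      have hstep : (m:ℝ) * s^2 ≤ (m:ℝ) * (1 / (4 * ((m+1 : ℕ) : ℝ))) :=
        mul_le_mul_of_nonneg_left hs2 (Nat.cast_nonneg m)
      have hm1 : (m:ℝ) < ((m+1 : ℕ) : ℝ) := by exact_mod_cast Nat.lt_succ_self m
      have hfinal : (m:ℝ) * (1 / (4 * ((m+1 : ℕ) : ℝ))) ≤ 1/4 := by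
        rw [mul_one_div, div_le_div_iff₀ (by positivity) (by norm_num)]
        nlinarith
      linarith
    linarith
  have hreal : 12 * t < 2 * s * (Real.sqrt (1 - s^2))^m := by
    have h12 : 12 * t < (3/2) * s := by
      rw [htdef, hsdef, mul_one_div, mul_one_div,
        div_lt_div_iff₀ (by positivity) (by positivity)]
      nlinarith [hsqpos]
    have h2 : (3/2) * s ≤ 2 * s * (Real.sqrt (1 - s^2))^m := by nlinarith [hrm, hs0]
    linarith
  have hscale : ENNReal.ofReal ((Real.sqrt (1 - s^2))^m)
        * volume (ball (0 : EuclideanSpace ℝ (Fin m)) 1)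
      ≤ volume (ball (0 : EuclideanSpace ℝ (Fin m)) (Real.sqrt (1 - s^2))) :=
    ManyLargeCoords.ball_scale m hr0
  have hlow : ENNReal.ofReal (2*s)
        * volume (ball (0 : EuclideanSpace ℝ (Fin m)) (Real.sqrt (1 - s^2)))
      ≤ volume (ball (0 : EuclideanSpace ℝ (Fin (m+1))) 1) :=
    ManyLargeCoords.ball_lower m hs0 hs1
  have h3 : 3 * volume (Set.Ioo (0:ℝ) 1 • ((↑) '' Aᶜ : Set (EuclideanSpace ℝ (Fin (m+1)))))
      < volume (ball (0 : EuclideanSpace ℝ (Fin (m+1))) 1) := by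
    calc 3 * volume (Set.Ioo (0:ℝ) 1 • ((↑) '' Aᶜ : Set (EuclideanSpace ℝ (Fin (m+1)))))
        ≤ 3 * (ENNReal.ofReal (4*t) * volume (ball (0 : EuclideanSpace ℝ (Fin m)) 1)) :=
          mul_le_mul_right hcone 3
      _ = ENNReal.ofReal (12*t) * volume (ball (0 : EuclideanSpace ℝ (Fin m)) 1) := by
          rw [show (3:ℝ≥0∞) = ENNReal.ofReal 3 by norm_num, ← mul_assoc,
            ← ENNReal.ofReal_mul (by norm_num)]
          congr 2
          ring
      _ < ENNReal.ofReal (2 * s * (Real.sqrt (1 - s^2))^m)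
            * volume (ball (0 : EuclideanSpace ℝ (Fin m)) 1) := by
          refine ENNReal.mul_lt_mul_left hVm0 hVmt ?_
          exact (ENNReal.ofReal_lt_ofReal_iff (by nlinarith [hrm, hs0])).mpr hreal
      _ = ENNReal.ofReal (2*s) * (ENNReal.ofReal ((Real.sqrt (1 - s^2))^m)
            * volume (ball (0 : EuclideanSpace ℝ (Fin m)) 1)) := by
          rw [← mul_assoc, ← ENNReal.ofReal_mul (by positivity)]
      _ ≤ ENNReal.ofReal (2*s)
            * volume (ball (0 : EuclideanSpace ℝ (Fin m)) (Real.sqrt (1 - s^2))) :=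
          mul_le_mul_right hscale _
      _ ≤ volume (ball (0 : EuclideanSpace ℝ (Fin (m+1))) 1) := hlow
  -- the measure of the complement is < 1/3
  have htoc : (volume : Measure (EuclideanSpace ℝ (Fin (m+1)))).toSphere Aᶜ
      = ((m+1 : ℕ) : ℝ≥0∞) *
        volume (Set.Ioo (0:ℝ) 1 • ((↑) '' Aᶜ : Set (EuclideanSpace ℝ (Fin (m+1))))) := by
    rw [Measure.toSphere_apply' _ hAmeas.compl, finrank_euclideanSpace_fin]
  have hμAc : uniformSphere (m+1) Aᶜ < 1/3 := by
    rw [uniformSphere, Measure.smul_apply, smul_eq_mul, htou, htoc,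
      ENNReal.mul_inv (Or.inl hN0') (Or.inl hNt')]
    have hrearr : (((m+1 : ℕ) : ℝ≥0∞))⁻¹
          * (volume (ball (0 : EuclideanSpace ℝ (Fin (m+1))) 1))⁻¹
          * (((m+1 : ℕ) : ℝ≥0∞) *
            volume (Set.Ioo (0:ℝ) 1 • ((↑) '' Aᶜ : Set (EuclideanSpace ℝ (Fin (m+1))))))
        = (((m+1 : ℕ) : ℝ≥0∞))⁻¹ * ((m+1 : ℕ) : ℝ≥0∞)
          * ((volume (ball (0 : EuclideanSpace ℝ (Fin (m+1))) 1))⁻¹ *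
            volume (Set.Ioo (0:ℝ) 1 • ((↑) '' Aᶜ : Set (EuclideanSpace ℝ (Fin (m+1)))))) := by
      ring
    rw [hrearr, ENNReal.inv_mul_cancel hN0' hNt', one_mul, mul_comm, ← div_eq_mul_inv,
      ENNReal.div_lt_iff (Or.inl hVB0) (Or.inl hVBt)]
    have hv : volume (Set.Ioo (0:ℝ) 1 • ((↑) '' Aᶜ : Set (EuclideanSpace ℝ (Fin (m+1)))))
        = 1/3 * (3 * volume (Set.Ioo (0:ℝ) 1 •
            ((↑) '' Aᶜ : Set (EuclideanSpace ℝ (Fin (m+1)))))) := by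
      rw [← mul_assoc, ENNReal.div_mul_cancel (by norm_num) (by norm_num), one_mul]
    rw [hv]
    exact ENNReal.mul_lt_mul_right (by norm_num) (by norm_num) h3
  -- conclude
  have hcompl := measure_compl (μ := uniformSphere (m+1)) hAmeas.compl (measure_ne_top _ _)
  rw [compl_compl, measure_univ] at hcompl
  show (2/3 : ℝ≥0∞) < uniformSphere (m+1) A
  rw [hcompl, lt_tsub_iff_right]
  calc (2:ℝ≥0∞)/3 + uniformSphere (m+1) Aᶜ < 2/3 + 1/3 :=
        ENNReal.add_lt_add_left ((ENNReal.div_lt_top (by norm_num) (by norm_num)).ne) hμAc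
    _ = 1 := by
        rw [ENNReal.div_add_div_same]
        norm_num
        exact ENNReal.div_self (by norm_num) (by norm_num)
end

section
/- Let l be a symmetric norm on R^n, let v in S^{n-1} achieve l(v) = b_l (the maximum of l on the unit sphere), and let V be a random vector with independent coordinates V_i ~ N(0, v_i^2). Then E[l(V)] >= 0.49 * b_l. -/
open MeasureTheory ProbabilityTheory
open scoped ENNReal

open scoped NNReal


lemma int_Ioi_aux : ∫ x in Set.Ioi (0:ℝ), x * Real.exp (-x ^ 2 / 2) = 1 := by
  have hderiv : ∀ x ∈ Set.Ici (0:ℝ),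
      HasDerivAt (fun y : ℝ => -Real.exp (-y ^ 2 / 2)) (x * Real.exp (-x ^ 2 / 2)) x := by
    intro x _
    have h1 : HasDerivAt (fun y : ℝ => -y ^ 2 / 2) (-x) x := by
      have h0 := (hasDerivAt_pow 2 x).neg.div_const 2
      refine h0.congr_deriv ?_
      push_cast
      ring
    have h2 := h1.exp.neg
    refine h2.congr_deriv ?_
    ring
  have hint : IntegrableOn (fun x : ℝ => x * Real.exp (-x ^ 2 / 2)) (Set.Ioi 0) := by
    have h := integrable_mul_exp_neg_mul_sq (b := (1/2:ℝ)) (by norm_num)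
    have h' : ∀ x : ℝ, -(1/2:ℝ) * x ^ 2 = -x ^ 2 / 2 := fun x => by ring
    simp_rw [h'] at h
    exact h.integrableOn
  have htend : Filter.Tendsto (fun y : ℝ => -Real.exp (-y ^ 2 / 2)) Filter.atTop (nhds 0) := by
    rw [show (0:ℝ) = -0 by ring]
    refine Filter.Tendsto.neg ?_
    apply Real.tendsto_exp_atBot.comp
    have h1 : Filter.Tendsto (fun y : ℝ => y ^ 2 / 2) Filter.atTop Filter.atTop :=
      (Filter.tendsto_pow_atTop (two_ne_zero)).atTop_div_const (by norm_num)
    have h2 := Filter.tendsto_neg_atTop_atBot.comp h1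
    have h' : ∀ x : ℝ, -(x ^ 2 / 2) = -x ^ 2 / 2 := fun x => by ring
    have h3 : (fun y : ℝ => -y ^ 2 / 2) = (Neg.neg ∘ fun y : ℝ => y ^ 2 / 2) := by
      funext y; simp [Function.comp]; ring
    rw [h3]; exact h2
  have := integral_Ioi_of_hasDerivAt_of_tendsto' (fun x hx => hderiv x hx) hint htend
  simpa using this

lemma gauss_density_eq : gaussianReal 0 1 =
    volume.withDensity (fun x => ((Real.toNNReal (gaussianPDFReal 0 1 x) : ℝ≥0) : ℝ≥0∞)) := by
  rw [gaussianReal_of_var_ne_zero 0 one_ne_zero]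
  rfl

lemma gauss_pdf_smul (x : ℝ) (r : ℝ) :
    (Real.toNNReal (gaussianPDFReal 0 1 x)) • r
      = (Real.sqrt (2 * Real.pi))⁻¹ * (Real.exp (-x ^ 2 / 2) * r) := by
  rw [NNReal.smul_def, Real.coe_toNNReal _ (gaussianPDFReal_nonneg 0 1 x)]
  rw [gaussianPDFReal]
  push_cast
  ring_nf

lemma gauss_integrand_integrable :
    Integrable (fun x : ℝ => (Real.toNNReal (gaussianPDFReal 0 1 x)) • |x|) volume := by
  simp_rw [gauss_pdf_smul]
  have h := (integrable_mul_exp_neg_mul_sq (b := (1/2:ℝ)) (by norm_num)).abs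
  have h' : ∀ x : ℝ, |x * Real.exp (-(1/2) * x ^ 2)| = Real.exp (-x ^ 2 / 2) * |x| := by
    intro x
    rw [abs_mul, abs_of_pos (Real.exp_pos _), mul_comm]
    congr 2
    ring
  simp_rw [h'] at h
  exact h.const_mul _

lemma gauss_abs_integrable : Integrable (fun y : ℝ => |y|) (gaussianReal 0 1) := by
  rw [gauss_density_eq,
    integrable_withDensity_iff_integrable_smul ((measurable_gaussianPDFReal 0 1).real_toNNReal)]
  exact gauss_integrand_integrable


lemma gauss_abs_integral : ∫ y, |y| ∂(gaussianReal 0 1) = 2 / Real.sqrt (2 * Real.pi) := by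
  rw [gauss_density_eq,
    integral_withDensity_eq_integral_smul ((measurable_gaussianPDFReal 0 1).real_toNNReal)]
  simp_rw [gauss_pdf_smul]
  rw [MeasureTheory.integral_const_mul]
  have h1 : ∀ x : ℝ, Real.exp (-x ^ 2 / 2) * |x| = |x| * Real.exp (-|x| ^ 2 / 2) := by
    intro x; rw [sq_abs]; ring
  simp_rw [h1]
  rw [integral_comp_abs (f := fun t => t * Real.exp (-t ^ 2 / 2)), int_Ioi_aux]
  rw [div_eq_mul_inv]
  ring


lemma comp_measure (σ : ℝ) :
    gaussianReal 0 (Real.toNNReal (σ ^ 2)) = (gaussianReal 0 1).map (σ * ·) := by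
  rw [gaussianReal_map_const_mul]
  congr 1
  · ring
  · ext
    simp [Real.coe_toNNReal _ (sq_nonneg σ)]

lemma comp_abs_integrable (σ : ℝ) :
    Integrable (fun y : ℝ => |y|) (gaussianReal 0 (Real.toNNReal (σ ^ 2))) := by
  rw [comp_measure σ]
  rw [integrable_map_measure continuous_abs.aestronglyMeasurable
    (measurable_const_mul σ).aemeasurable]
  have : ((fun y : ℝ => |y|) ∘ (σ * ·)) = fun y => |σ| * |y| := by
    funext y; simp [Function.comp, abs_mul]
  rw [this]
  exact gauss_abs_integrable.const_mul _

lemma comp_abs_integral (σ : ℝ) :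
    ∫ y, |y| ∂(gaussianReal 0 (Real.toNNReal (σ ^ 2))) = |σ| * (2 / Real.sqrt (2 * Real.pi)) := by
  rw [comp_measure σ, integral_map (measurable_const_mul σ).aemeasurable
    continuous_abs.aestronglyMeasurable]
  simp_rw [abs_mul]
  rw [MeasureTheory.integral_const_mul, gauss_abs_integral]

lemma pi_map_eval {n : ℕ} (μs : Fin n → Measure ℝ) [∀ i, IsProbabilityMeasure (μs i)]
    (i : Fin n) : (Measure.pi μs).map (Function.eval i) = μs i := by
  ext s hs
  rw [Measure.map_apply (measurable_pi_apply i) hs, Set.eval_preimage, Measure.pi_pi]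
  rw [Finset.prod_eq_single i (fun j _ hj => by simp [Function.update_of_ne hj])
    (fun h => absurd (Finset.mem_univ i) h)]
  simp

lemma pi_eval_abs_integrable {n : ℕ} (μs : Fin n → Measure ℝ) [∀ i, IsProbabilityMeasure (μs i)]
    (i : Fin n) (h : Integrable (fun y : ℝ => |y|) (μs i)) :
    Integrable (fun x : Fin n → ℝ => |x i|) (Measure.pi μs) := by
  have := (integrable_map_measure continuous_abs.aestronglyMeasurable
    (measurable_pi_apply i).aemeasurable).mp (by rwa [pi_map_eval μs i])
  exact this

lemma pi_eval_abs_integral {n : ℕ} (μs : Fin n → Measure ℝ) [∀ i, IsProbabilityMeasure (μs i)]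
    (i : Fin n) :
    ∫ x, |x i| ∂(Measure.pi μs) = ∫ y, |y| ∂(μs i) := by
  have h := integral_map (μ := Measure.pi μs) (φ := fun x => x i) (f := fun y => |y|)
    (measurable_pi_apply i).aemeasurable
    (by rw [show (Measure.pi μs).map (fun x => x i) = μs i from pi_map_eval μs i]
        exact continuous_abs.aestronglyMeasurable)
  rw [show (Measure.pi μs).map (fun x => x i) = μs i from pi_map_eval μs i] at h
  exact h.symm

/-- If `v ∈ S^{n-1}` achieves the maximum `b` of a symmetric norm `l` on the
unit sphere, and `V` has independent coordinates `V i ~ N(0, (v i)^2)`, then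
`E[l V] ≥ 0.49 * b`. -/
theorem expected_norm_of_randomized_maximizer {n : ℕ} (l : (Fin n → ℝ) → ℝ)
    (htri : ∀ x y, l (x + y) ≤ l x + l y)
    (hhom : ∀ (c : ℝ) x, l (c • x) = |c| * l x)
    (hdef : ∀ x, l x = 0 ↔ x = 0)
    (hperm : ∀ (σ : Equiv.Perm (Fin n)) x, l (fun i => x (σ i)) = l x)
    (hsign : ∀ x, l (fun i => |x i|) = l x)
    (b : ℝ) (hb : IsGreatest (l '' {x : Fin n → ℝ | ∑ i, (x i) ^ 2 = 1}) b)
    (v : Fin n → ℝ) (hv : ∑ i, (v i) ^ 2 = 1) (hvb : l v = b) :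
    0.49 * b ≤ ∫ x, l x ∂(Measure.pi fun i => gaussianReal 0 (Real.toNNReal ((v i) ^ 2))) := by
  set μs : Fin n → Measure ℝ := fun i => gaussianReal 0 (Real.toNNReal ((v i) ^ 2)) with hμs
  have hneg : ∀ x, l (-x) = l x := fun x => by
    have h := hhom (-1) x; simpa using h
  have hl0 : l 0 = 0 := (hdef 0).mpr rfl
  have hlnn : ∀ x, 0 ≤ l x := by
    intro x
    have h := htri x (-x)
    rw [add_neg_cancel, hl0, hneg] at h
    linarith
  have hb0 : 0 ≤ b := hvb ▸ hlnn v
  -- key bound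
  have hle : ∀ z : Fin n → ℝ, l z ≤ b * Real.sqrt (∑ i, z i ^ 2) := by
    intro z
    by_cases hz : z = 0
    · simp only [hz, hl0]
      positivity
    · have hsum : 0 < ∑ i, z i ^ 2 := by
        obtain ⟨i, hi⟩ : ∃ i, z i ≠ 0 := by
          by_contra h; push_neg at h; exact hz (funext h)
        have h1 : 0 < z i ^ 2 := by positivity
        exact lt_of_lt_of_le h1
          (Finset.single_le_sum (fun j _ => sq_nonneg (z j)) (Finset.mem_univ i))
      set r := Real.sqrt (∑ i, z i ^ 2) with hr
      have hrpos : 0 < r := Real.sqrt_pos.mpr hsum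
      have hr2 : r ^ 2 = ∑ i, z i ^ 2 := Real.sq_sqrt hsum.le
      have hmem : (∑ i, ((r⁻¹ • z) i) ^ 2) = 1 := by
        simp only [Pi.smul_apply, smul_eq_mul, mul_pow]
        rw [← Finset.mul_sum, inv_pow, ← hr2]
        field_simp
      have hub : l (r⁻¹ • z) ≤ b := hb.2 ⟨r⁻¹ • z, hmem, rfl⟩
      calc l z = r * (r⁻¹ * l z) := by field_simp
        _ = r * l (r⁻¹ • z) := by rw [hhom r⁻¹ z, abs_of_pos (inv_pos.mpr hrpos)]
        _ ≤ r * b := mul_le_mul_of_nonneg_left hub hrpos.le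
        _ = b * r := mul_comm _ _
  -- continuity
  have key : ∀ x y : Fin n → ℝ, l x - l y ≤ b * Real.sqrt n * dist x y := by
    intro x y
    have h1 : l x ≤ l (x - y) + l y := by
      have h := htri (x - y) y
      rw [sub_add_cancel] at h
      exact h
    have h2 : l (x - y) ≤ b * Real.sqrt (∑ i, (x i - y i) ^ 2) := by
      have h := hle (x - y)
      simpa using h
    have hsumle : ∑ i, (x i - y i) ^ 2 ≤ n * dist x y ^ 2 := by
      calc ∑ i, (x i - y i) ^ 2 ≤ ∑ _i : Fin n, dist x y ^ 2 := by
            refine Finset.sum_le_sum fun i _ => ?_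
            have hd := dist_le_pi_dist x y i
            rw [Real.dist_eq] at hd
            calc (x i - y i) ^ 2 = |x i - y i| ^ 2 := (sq_abs _).symm
              _ ≤ dist x y ^ 2 := pow_le_pow_left₀ (abs_nonneg _) hd 2
        _ = n * dist x y ^ 2 := by
            rw [Finset.sum_const, Finset.card_univ, Fintype.card_fin, nsmul_eq_mul]
    have h3 : Real.sqrt (∑ i, (x i - y i) ^ 2) ≤ Real.sqrt n * dist x y := by
      calc Real.sqrt (∑ i, (x i - y i) ^ 2) ≤ Real.sqrt (n * dist x y ^ 2) :=
            Real.sqrt_le_sqrt hsumle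
        _ = Real.sqrt n * dist x y := by
            rw [Real.sqrt_mul (Nat.cast_nonneg n), Real.sqrt_sq dist_nonneg]
    have h4 : b * Real.sqrt (∑ i, (x i - y i) ^ 2) ≤ b * (Real.sqrt n * dist x y) :=
      mul_le_mul_of_nonneg_left h3 hb0
    calc l x - l y ≤ l (x - y) := by linarith
      _ ≤ b * (Real.sqrt n * dist x y) := le_trans h2 h4
      _ = b * Real.sqrt n * dist x y := by ring
  have hcont : Continuous l := by
    refine LipschitzWith.continuous (K := Real.toNNReal (b * Real.sqrt n)) ?_
    apply LipschitzWith.of_dist_le_mul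
    intro x y
    rw [Real.dist_eq, Real.coe_toNNReal', abs_sub_le_iff]
    constructor
    · exact le_trans (key x y) (mul_le_mul_of_nonneg_right (le_max_left _ _) dist_nonneg)
    · refine le_trans (key y x) ?_
      rw [dist_comm]
      exact mul_le_mul_of_nonneg_right (le_max_left _ _) dist_nonneg
  -- convexity
  have hconv : ConvexOn ℝ Set.univ l := by
    refine ⟨convex_univ, fun x _ y _ a c ha hc _ => ?_⟩
    calc l (a • x + c • y) ≤ l (a • x) + l (c • y) := htri _ _
      _ = a * l x + c * l y := by rw [hhom, hhom, abs_of_nonneg ha, abs_of_nonneg hc]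
      _ = a • l x + c • l y := by simp [smul_eq_mul]
  -- integrability of components
  have hint : ∀ i, Integrable (fun x : Fin n → ℝ => |x i|) (Measure.pi μs) := fun i =>
    pi_eval_abs_integrable μs i (comp_abs_integrable (v i))
  set c : ℝ := 2 / Real.sqrt (2 * Real.pi) with hc
  have hcpos : 0 < c := by
    have : 0 < Real.sqrt (2 * Real.pi) := Real.sqrt_pos.mpr (by positivity)
    positivity
  have hmi : ∀ i, ∫ x, |x i| ∂(Measure.pi μs) = |v i| * c := by
    intro i
    rw [pi_eval_abs_integral μs i]
    exact comp_abs_integral (v i)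
  set f : (Fin n → ℝ) → (Fin n → ℝ) := fun x i => |x i| with hfdef
  have hf_eq : f = fun x => ∑ i, |x i| • Pi.single i (1:ℝ) := by
    funext x j
    simp [hfdef, Finset.sum_apply, Pi.single_apply]
  have hfi : Integrable f (Measure.pi μs) := by
    rw [hf_eq]
    exact integrable_finset_sum _ (fun i _ => (hint i).smul_const _)
  have hfint : ∫ x, f x ∂(Measure.pi μs) = c • (fun i => |v i|) := by
    rw [hf_eq, integral_finset_sum _ (fun i _ => (hint i).smul_const _)]
    funext j
    simp_rw [integral_smul_const, hmi]
    simp [Finset.sum_apply, Pi.single_apply, mul_comm]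
  have hgi : Integrable (fun x => l x) (Measure.pi μs) := by
    have hbnd : Integrable (fun x : Fin n → ℝ => b * ∑ i, |x i|) (Measure.pi μs) :=
      (integrable_finset_sum _ (fun i _ => hint i)).const_mul b
    refine hbnd.mono hcont.aestronglyMeasurable (Filter.Eventually.of_forall fun x => ?_)
    rw [Real.norm_eq_abs, Real.norm_eq_abs, abs_of_nonneg (hlnn x)]
    have h1 : l x ≤ b * Real.sqrt (∑ i, x i ^ 2) := hle x
    have h2 : Real.sqrt (∑ i, x i ^ 2) ≤ ∑ i, |x i| := by
      have hsq : ∑ i, x i ^ 2 = ∑ i, |x i| ^ 2 := by simp [sq_abs]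
      have hs := Finset.sum_sq_le_sq_sum_of_nonneg
        (s := Finset.univ) (f := fun i => |x i|) (fun i _ => abs_nonneg _)
      calc Real.sqrt (∑ i, x i ^ 2) = Real.sqrt (∑ i, |x i| ^ 2) := by rw [hsq]
        _ ≤ Real.sqrt ((∑ i, |x i|) ^ 2) := Real.sqrt_le_sqrt hs
        _ = ∑ i, |x i| := Real.sqrt_sq (Finset.sum_nonneg fun i _ => abs_nonneg _)
    have h3 : b * Real.sqrt (∑ i, x i ^ 2) ≤ b * ∑ i, |x i| :=
      mul_le_mul_of_nonneg_left h2 hb0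
    exact le_trans (le_trans h1 h3) (le_abs_self _)
  have hgfi : Integrable (l ∘ f) (Measure.pi μs) := by
    have hlf : l ∘ f = fun x => l x := funext fun x => hsign x
    rw [hlf]; exact hgi
  have hjensen := hconv.map_integral_le (μ := Measure.pi μs) hcont.continuousOn isClosed_univ
    (Filter.Eventually.of_forall fun x => Set.mem_univ _) hfi hgfi
  rw [hfint] at hjensen
  have hval : l (c • fun i => |v i|) = c * b := by
    rw [hhom, abs_of_pos hcpos, hsign v, hvb]
  have hcongr : ∫ x, l (f x) ∂(Measure.pi μs) = ∫ x, l x ∂(Measure.pi μs) := by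
    have hlf : (fun x => l (f x)) = fun x => l x := funext fun x => hsign x
    rw [hlf]
  have hc049 : (0.49 : ℝ) ≤ c := by
    have hsp : 0 < Real.sqrt (2 * Real.pi) := Real.sqrt_pos.mpr (by positivity)
    have hs3 : Real.sqrt (2 * Real.pi) ≤ 3 := by
      have h9 : (2 * Real.pi) ≤ 9 := by nlinarith [Real.pi_le_four]
      calc Real.sqrt (2 * Real.pi) ≤ Real.sqrt 9 := Real.sqrt_le_sqrt h9
        _ = 3 := by
          rw [show (9:ℝ) = 3 ^ 2 by norm_num, Real.sqrt_sq (by norm_num)]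
    rw [hc, le_div_iff₀ hsp]
    nlinarith
  calc (0.49 : ℝ) * b ≤ c * b := mul_le_mul_of_nonneg_right hc049 hb0
    _ = l (c • fun i => |v i|) := hval.symm
    _ ≤ ∫ x, l (f x) ∂(Measure.pi μs) := hjensen
    _ = ∫ x, l x ∂(Measure.pi μs) := hcongr
end

section
/- Let l be a Q-norm on R^n, i.e., l(x) = Phi(x^2)^{1/2} for a symmetric norm Phi, where x^2 denotes coordinate-wise squaring. Then for every integer 0 < n' <= n, l(xi^(n')) >= l(xi^(n))/2, where xi^(k) in R^n is the vector with first k coordinates equal to 1/sqrt(k) and zeros elsewhere. -/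
/-- The vector `ξ^(k)` in `ℝ^n`: first `k` coordinates equal to `1/√k`, zeros
elsewhere. -/
noncomputable def xiVec (n k : ℕ) : Fin n → ℝ :=
  fun i => if (i : ℕ) < k then 1 / Real.sqrt k else 0

/-- For a Q-norm `l(x) = Φ(x²)^{1/2}` (with `Φ` a symmetric norm and `x²` the
coordinate-wise square), `l(ξ^(n')) ≥ l(ξ^(n)) / 2` for every `0 < n' ≤ n`. -/
theorem qnorm_xi_monotone {n : ℕ} (Φ : (Fin n → ℝ) → ℝ)
    (htri : ∀ x y, Φ (x + y) ≤ Φ x + Φ y)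
    (hhom : ∀ (c : ℝ) x, Φ (c • x) = |c| * Φ x)
    (hdef : ∀ x, Φ x = 0 ↔ x = 0)
    (hperm : ∀ (σ : Equiv.Perm (Fin n)) x, Φ (fun i => x (σ i)) = Φ x)
    (hsign : ∀ x, Φ (fun i => |x i|) = Φ x)
    (n' : ℕ) (hn'₀ : 0 < n') (hn' : n' ≤ n) :
    Real.sqrt (Φ (fun i => (xiVec n n i) ^ 2)) / 2 ≤
      Real.sqrt (Φ (fun i => (xiVec n n' i) ^ 2)) := by
  have hn : 0 < n := lt_of_lt_of_le hn'₀ hn'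
  haveI : NeZero n := ⟨hn.ne'⟩
  -- basic facts about Φ
  have hzero : Φ 0 = 0 := (hdef 0).mpr rfl
  have habs : ∀ x : Fin n → ℝ, Φ (fun i => |x i|) = Φ x := hsign
  have hnonneg : ∀ x : Fin n → ℝ, 0 ≤ Φ x := by
    intro x
    have hneg : Φ (-x) = Φ x := by
      rw [← habs (-x), ← habs x]
      congr 1; funext i; simp
    have h0 : (0 : Fin n → ℝ) = x + (-x) := by ring
    have := htri x (-x)
    rw [← h0, hzero, hneg] at this
    linarith
  -- restriction lemma: zeroing out coordinates decreases Φ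
  have hrestrict : ∀ (p : Fin n → Bool) (x : Fin n → ℝ),
      Φ (fun i => if p i then x i else 0) ≤ Φ x := by
    intro p x
    set y : Fin n → ℝ := fun i => if p i then x i else -x i with hy
    have hyΦ : Φ y = Φ x := by
      rw [← habs y, ← habs x]
      congr 1; funext i
      simp only [hy]
      split <;> simp
    have key : (fun i => if p i then x i else 0) = (1/2 : ℝ) • (x + y) := by
      funext i
      simp only [Pi.smul_apply, Pi.add_apply, smul_eq_mul, hy]
      split <;> ring
    rw [key, hhom]
    have h1 := htri x y
    have : |(1:ℝ)/2| = 1/2 := by norm_num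
    rw [this]
    nlinarith [hyΦ]
  -- triangle inequality for finite sums
  have htriSum : ∀ (s : Finset ℕ) (f : ℕ → Fin n → ℝ),
      Φ (∑ m ∈ s, f m) ≤ ∑ m ∈ s, Φ (f m) := by
    intro s f
    induction s using Finset.cons_induction with
    | empty => simp [hzero]
    | cons a s ha ih =>
      rw [Finset.sum_cons, Finset.sum_cons]
      calc Φ (f a + ∑ m ∈ s, f m) ≤ Φ (f a) + Φ (∑ m ∈ s, f m) := htri _ _
        _ ≤ Φ (f a) + ∑ m ∈ s, Φ (f m) := by linarith
  -- the two squared vectors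
  have hu : (fun i => (xiVec n n i) ^ 2) = (fun _ => (1:ℝ)/n) := by
    funext i
    simp only [xiVec, i.isLt, if_true]
    rw [div_pow, one_pow, Real.sq_sqrt (by positivity : (0:ℝ) ≤ (n:ℕ))]
  set v : Fin n → ℝ := fun i => if (i : ℕ) < n' then (1:ℝ)/n' else 0 with hv
  have hv' : (fun i => (xiVec n n' i) ^ 2) = v := by
    funext i
    simp only [xiVec, hv]
    split
    · rw [div_pow, one_pow, Real.sq_sqrt (by positivity : (0:ℝ) ≤ (n':ℕ))]
    · ring
  -- the base block: first n' coordinates equal to 1/n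
  set base : Fin n → ℝ := fun i => if (i : ℕ) < n' then (1:ℝ)/n else 0 with hbase
  have hbasev : Φ base = ((n':ℝ)/n) * Φ v := by
    have : base = ((n':ℝ)/n) • v := by
      funext i
      simp only [hbase, hv, Pi.smul_apply, smul_eq_mul]
      split
      · field_simp
      · ring
    rw [this, hhom, abs_of_nonneg (by positivity)]
  -- arithmetic with d = (n-1)/n'
  set d : ℕ := (n - 1) / n' with hd
  have key := Nat.div_add_mod (n - 1) n'
  have hdn : n' * d ≤ n - 1 := Nat.le.intro key
  -- each block has Φ at most Φ base
  have hblock : ∀ m : ℕ, m ≤ d →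
      Φ (fun i => if (i : ℕ) / n' = m then (1:ℝ)/n else 0) ≤ Φ base := by
    intro m hm
    have ha : m * n' < n := by
      calc m * n' ≤ d * n' := Nat.mul_le_mul_right n' hm
        _ = n' * d := Nat.mul_comm _ _
        _ ≤ n - 1 := hdn
        _ < n := by omega
    set a : ℕ := m * n' with hadef
    open Fin.NatCast in have hav : (((a : ℕ) : Fin n) : ℕ) = a := Fin.val_cast_of_lt ha
    open Fin.NatCast in set σ : Equiv.Perm (Fin n) := Equiv.subRight ((a : ℕ) : Fin n) with hσ
    have hw : Φ (fun i => base (σ i)) = Φ base := hperm σ base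
    have heq : (fun i : Fin n => if (i : ℕ) / n' = m then (1:ℝ)/n else 0)
        = fun i : Fin n => if (decide (a ≤ (i : ℕ)) : Bool) then (fun j => base (σ j)) i else 0 := by
      funext i
      open Fin.NatCast in
      have hsub : ((i - ((a : ℕ) : Fin n) : Fin n) : ℕ) = ((n - a) + (i : ℕ)) % n := by
        rw [Fin.sub_def, hav]
      simp only [hσ, Equiv.subRight_apply, hbase]
      by_cases hia : a ≤ (i : ℕ)
      · have hmod : ((n - a) + (i : ℕ)) % n = (i : ℕ) - a := by
          have hi : (i : ℕ) < n := i.isLt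
          have : (n - a) + (i : ℕ) = ((i:ℕ) - a) + n := by omega
          rw [this, Nat.add_mod_right, Nat.mod_eq_of_lt (by omega)]
        have hdivm : ((i : ℕ) / n' = m) ↔ ((i : ℕ) - a < n') := by
          constructor
          · intro h
            have h1 := Nat.div_add_mod (i : ℕ) n'
            have h2 : (i : ℕ) % n' < n' := Nat.mod_lt _ hn'₀
            have h3 : n' * ((i:ℕ) / n') = n' * m := by rw [h]
            have h4 : (i : ℕ) < n' * m + n' := by omega
            have h5 : n' * m = m * n' := Nat.mul_comm _ _
            omega
          · intro h
            apply Nat.div_eq_of_lt_le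
            · omega
            · have hmn : (m+1) * n' = m * n' + n' := by ring
              omega
        rw [if_pos (show (decide (a ≤ (i : ℕ)) : Bool) = true by simpa using hia),
          hsub, hmod, if_congr hdivm rfl rfl]
      · rw [if_neg (show ¬ ((decide (a ≤ (i : ℕ)) : Bool) = true) by simpa using hia)]
        have hdm : (i : ℕ) / n' ≠ m := by
          intro h
          have h1 : m * n' ≤ (i : ℕ) := by
            have h2 := Nat.div_mul_le_self (i : ℕ) n'
            rw [h] at h2; exact h2
          omega
        rw [if_neg hdm]
    rw [heq]
    exact le_trans (hrestrict _ _) (le_of_eq hw)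
  -- decompose the constant vector into blocks
  have hdecomp : (fun _ : Fin n => (1:ℝ)/n)
      = ∑ m ∈ Finset.range (d + 1), (fun i : Fin n => if (i : ℕ) / n' = m then (1:ℝ)/n else 0) := by
    funext i
    rw [Finset.sum_apply]
    have hmem : (i : ℕ) / n' ∈ Finset.range (d + 1) := by
      rw [Finset.mem_range, Nat.lt_succ_iff, hd]
      exact Nat.div_le_div_right (by omega)
    rw [Finset.sum_ite_eq, if_pos hmem]
  -- combine
  have hΦv : 0 ≤ Φ v := hnonneg v
  have hmain : Φ (fun _ : Fin n => (1:ℝ)/n) ≤ 4 * Φ v := by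
    calc Φ (fun _ : Fin n => (1:ℝ)/n)
        = Φ (∑ m ∈ Finset.range (d + 1),
            (fun i : Fin n => if (i : ℕ) / n' = m then (1:ℝ)/n else 0)) := by rw [← hdecomp]
      _ ≤ ∑ m ∈ Finset.range (d + 1),
            Φ (fun i : Fin n => if (i : ℕ) / n' = m then (1:ℝ)/n else 0) := htriSum _ _
      _ ≤ ∑ m ∈ Finset.range (d + 1), Φ base := by
            apply Finset.sum_le_sum
            intro m hm
            exact hblock m (by simpa [Nat.lt_succ_iff] using hm)
      _ = (d + 1 : ℕ) * Φ base := by rw [Finset.sum_const, Finset.card_range, nsmul_eq_mul]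
      _ = ((d : ℝ) + 1) * (((n':ℝ)/n) * Φ v) := by rw [hbasev]; push_cast; ring
      _ ≤ 2 * Φ v := by
            have hdnr : (n':ℝ) * d ≤ (n:ℝ) - 1 := by
              have h3 : n' * d + 1 ≤ n := by omega
              have h4 : ((n' * d : ℕ) : ℝ) + 1 ≤ (n : ℕ) := by exact_mod_cast h3
              push_cast at h4
              linarith
            have hn'r : (n':ℝ) ≤ n := by exact_mod_cast hn'
            have hnr : (1:ℝ) ≤ n := by exact_mod_cast hn
            have h2n : ((d:ℝ) + 1) * (n':ℝ) ≤ 2 * n := by nlinarith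
            have hq : ((d:ℝ) + 1) * ((n':ℝ)/n) ≤ 2 := by
              calc ((d:ℝ) + 1) * ((n':ℝ)/n) = (((d:ℝ) + 1) * (n':ℝ)) / n := by ring
                _ ≤ (2 * n) / n := by gcongr
                _ = 2 := by field_simp
            nlinarith [mul_le_mul_of_nonneg_right hq hΦv]
      _ ≤ 4 * Φ v := by linarith
  rw [hu, hv']
  rw [div_le_iff₀ (by norm_num : (0:ℝ) < 2)]
  calc Real.sqrt (Φ fun _ => (1:ℝ)/n) ≤ Real.sqrt (4 * Φ v) := Real.sqrt_le_sqrt hmain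
    _ = 2 * Real.sqrt (Φ v) := by
        rw [show (4:ℝ) = 2^2 by norm_num, Real.sqrt_mul (by positivity),
          Real.sqrt_sq (by norm_num)]
    _ = Real.sqrt (Φ v) * 2 := by ring
end

section
/- Let l be a Q-norm on R^n. Then for every x on the Euclidean unit sphere S^{n-1}, l(xi^(n)) <= 6*sqrt(log n)*l(x), where xi^(n) = (1/sqrt(n))(1,...,1). In other words, the normalized all-ones vector approximately minimizes a Q-norm over the unit sphere up to a factor 6*sqrt(log n). -/
open Finset

section Aux
variable {n : ℕ} (Φ : (Fin n → ℝ) → ℝ)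
    (htri : ∀ x y, Φ (x + y) ≤ Φ x + Φ y)
    (hhom : ∀ (c : ℝ) x, Φ (c • x) = |c| * Φ x)
    (hsign : ∀ x, Φ (fun i => |x i|) = Φ x)
    (hperm : ∀ (σ : Equiv.Perm (Fin n)) x, Φ (fun i => x (σ i)) = Φ x)

include hhom in
lemma phi_zero : Φ 0 = 0 := by
  have := hhom 0 0
  simpa using this

include htri hhom in
lemma phi_nonneg (z : Fin n → ℝ) : 0 ≤ Φ z := by
  have h := htri z (-z)
  have h2 : Φ (-z) = Φ z := by
    have := hhom (-1) z; simpa using this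
  have h0 : Φ 0 = 0 := phi_zero Φ hhom
  rw [show z + -z = 0 by abel] at h
  linarith

include htri hhom hsign in
lemma phi_update (v : Fin n → ℝ) (j : Fin n) (c : ℝ) (hc0 : 0 ≤ c) (hcv : c ≤ v j) :
    Φ (Function.update v j c) ≤ Φ v := by
  rcases eq_or_lt_of_le (hc0.trans hcv) with h0 | hpos
  · have hc : c = v j := le_antisymm hcv (h0 ▸ hc0)
    rw [hc, Function.update_eq_self]
  · set a : ℝ := (v j + c) / (2 * v j) with ha
    set b : ℝ := (v j - c) / (2 * v j) with hb
    set v' : Fin n → ℝ := Function.update v j (-(v j)) with hv'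
    have hne : v j ≠ 0 := ne_of_gt hpos
    have hab : a + b = 1 := by
      rw [ha, hb, ← add_div, div_eq_one_iff_eq (by positivity)]
      ring
    have ha0 : 0 ≤ a := by positivity
    have hb0 : 0 ≤ b := by
      apply div_nonneg (by linarith) (by linarith)
    have hid : Function.update v j c = a • v + b • v' := by
      funext i
      by_cases hij : i = j
      · subst hij
        simp only [Function.update_self, hv', Pi.add_apply, Pi.smul_apply,
          smul_eq_mul, ha, hb]
        field_simp
        ring
      · simp [Function.update, hij, hv']
        rw [← add_mul, hab, one_mul]
    have hΦv' : Φ v' = Φ v := by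
      have h1 : (fun i => |v' i|) = (fun i => |v i|) := by
        funext i
        by_cases hij : i = j
        · subst hij; simp [hv', Function.update]
        · simp [hv', Function.update, hij]
      rw [← hsign v', h1, hsign v]
    calc Φ (Function.update v j c) = Φ (a • v + b • v') := by rw [hid]
      _ ≤ Φ (a • v) + Φ (b • v') := htri _ _
      _ = a * Φ v + b * Φ v := by
          rw [hhom, hhom, abs_of_nonneg ha0, abs_of_nonneg hb0, hΦv']
      _ = Φ v := by rw [← add_mul, hab, one_mul]

include htri hhom hsign in
lemma phi_mono (u v : Fin n → ℝ) (hu : ∀ j, 0 ≤ u j) (huv : ∀ j, u j ≤ v j) :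
    Φ u ≤ Φ v := by
  have key : ∀ s : Finset (Fin n), Φ (fun j => if j ∈ s then u j else v j) ≤ Φ v := by
    intro s
    induction s using Finset.induction_on with
    | empty => simp
    | @insert a s ha ih =>
      have hfun : (fun j => if j ∈ insert a s then u j else v j)
          = Function.update (fun j => if j ∈ s then u j else v j) a (u a) := by
        funext i
        by_cases hia : i = a
        · subst hia; simp
        · simp [Function.update, hia, Finset.mem_insert]
      rw [hfun]
      refine le_trans (phi_update Φ htri hhom hsign _ a (u a) (hu a) ?_) ih
      simp [ha]
      exact huv a
  have := key Finset.univ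
  simpa using this

end Aux

def qind {n : ℕ} (A : Finset (Fin n)) : Fin n → ℝ := fun j => if j ∈ A then 1 else 0

lemma qind_nonneg {n : ℕ} (A : Finset (Fin n)) (j : Fin n) : 0 ≤ qind A j := by
  unfold qind; split <;> norm_num

section Aux2
variable {n : ℕ} (Φ : (Fin n → ℝ) → ℝ)
    (hperm : ∀ (σ : Equiv.Perm (Fin n)) x, Φ (fun i => x (σ i)) = Φ x)

include hperm in
lemma phi_ind_congr (A B : Finset (Fin n)) (h : A.card = B.card) :
    Φ (qind A) = Φ (qind B) := by
  classical
  have hcA : Fintype.card {x // x ∈ A} = Fintype.card {x // x ∈ B} := by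
    simp [Fintype.card_coe, h]
  have hcA' : Fintype.card {x : Fin n // ¬ x ∈ A} = Fintype.card {x : Fin n // ¬ x ∈ B} := by
    rw [Fintype.card_subtype_compl, Fintype.card_subtype_compl]
    simp [Fintype.card_coe, h]
  let e : {x // x ∈ A} ≃ {x // x ∈ B} := Fintype.equivOfCardEq hcA
  let e' : {x : Fin n // ¬ x ∈ A} ≃ {x : Fin n // ¬ x ∈ B} := Fintype.equivOfCardEq hcA'
  let σ : Equiv.Perm (Fin n) := Equiv.subtypeCongr e e'
  have hσ : ∀ i : Fin n, (σ i ∈ B) ↔ (i ∈ A) := by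
    intro i
    by_cases hi : i ∈ A
    · have h1 : σ i = (e ⟨i, hi⟩ : Fin n) := by
        simp only [σ, Equiv.subtypeCongr, Equiv.trans_apply, Equiv.symm_apply_eq]
        rw [Equiv.sumCompl_symm_apply_of_pos hi]
        simp
      rw [h1]
      simp only [hi, iff_true]
      exact (e ⟨i, hi⟩).2
    · have h1 : σ i = (e' ⟨i, hi⟩ : Fin n) := by
        simp only [σ, Equiv.subtypeCongr, Equiv.trans_apply, Equiv.symm_apply_eq]
        rw [Equiv.sumCompl_symm_apply_of_neg hi]
        simp
      rw [h1]
      simp only [hi, iff_false]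
      exact (e' ⟨i, hi⟩).2
  have hfun : (fun i => qind B (σ i)) = qind A := by
    funext i
    simp only [qind, hσ i]
  calc Φ (qind A) = Φ (fun i => qind B (σ i)) := by rw [hfun]
    _ = Φ (qind B) := hperm σ (qind B)

end Aux2

section C
variable {n : ℕ} (Φ : (Fin n → ℝ) → ℝ)

lemma phi_ind_mono (htri : ∀ x y, Φ (x + y) ≤ Φ x + Φ y)
    (hhom : ∀ (c : ℝ) x, Φ (c • x) = |c| * Φ x)
    (hsign : ∀ x, Φ (fun i => |x i|) = Φ x)
    (hperm : ∀ (σ : Equiv.Perm (Fin n)) x, Φ (fun i => x (σ i)) = Φ x)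
    (A B : Finset (Fin n)) (h : A.card ≤ B.card) :
    Φ (qind A) ≤ Φ (qind B) := by
  obtain ⟨B', hB'sub, hB'card⟩ := Finset.exists_subset_card_eq h
  rw [phi_ind_congr Φ hperm A B' hB'card.symm]
  apply phi_mono Φ htri hhom hsign _ _ (qind_nonneg B')
  intro j
  unfold qind
  by_cases hj : j ∈ B'
  · simp [hj, hB'sub hj]
  · simp [hj, qind_nonneg]
    split <;> norm_num

lemma phi_ind_le (htri : ∀ x y, Φ (x + y) ≤ Φ x + Φ y)
    (hhom : ∀ (c : ℝ) x, Φ (c • x) = |c| * Φ x)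
    (hsign : ∀ x, Φ (fun i => |x i|) = Φ x)
    (hperm : ∀ (σ : Equiv.Perm (Fin n)) x, Φ (fun i => x (σ i)) = Φ x)
    (V : Finset (Fin n)) (k : ℕ) :
    ∀ A : Finset (Fin n), A.card ≤ k * V.card → Φ (qind A) ≤ k * Φ (qind V) := by
  induction k with
  | zero =>
    intro A hA
    have : A = ∅ := Finset.card_eq_zero.mp (by omega)
    subst this
    have : qind (∅ : Finset (Fin n)) = (0 : Fin n → ℝ) := by
      funext j; simp [qind]
    rw [this, phi_zero Φ hhom]
    simp
  | succ k ih =>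
    intro A hA
    have hV0 : 0 ≤ Φ (qind V) := phi_nonneg Φ htri hhom _
    by_cases h : A.card ≤ V.card
    · have h1 := phi_ind_mono Φ htri hhom hsign hperm A V h
      have : (k : ℝ) * Φ (qind V) ≥ 0 := by positivity
      push_cast
      nlinarith
    · push_neg at h
      obtain ⟨A', hA'sub, hA'card⟩ := Finset.exists_subset_card_eq h.le
      have hsplit : qind A = qind A' + qind (A \ A') := by
        funext j
        simp only [qind, Pi.add_apply, Finset.mem_sdiff]
        by_cases hj' : j ∈ A'
        · simp [hj', hA'sub hj']
        · by_cases hj : j ∈ A <;> simp [hj, hj']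
      have hcard : (A \ A').card ≤ k * V.card := by
        rw [Finset.card_sdiff_of_subset hA'sub, hA'card]
        have hA2 : A.card ≤ k * V.card + V.card := by
          rw [Nat.succ_mul] at hA; exact hA
        omega
      have h1 : Φ (qind A) ≤ Φ (qind A') + Φ (qind (A \ A')) := by
        rw [hsplit]; exact htri _ _
      have h2 : Φ (qind A') = Φ (qind V) := phi_ind_congr Φ hperm _ _ hA'card
      have h3 := ih _ hcard
      push_cast
      linarith
end C

lemma qnorm_log_bound (n : ℕ) (hn : 2 ≤ n) :
    16 * ((Nat.clog 2 n : ℕ) : ℝ) ≤ 36 * Real.log n := by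
  have hlt : 2 ^ (Nat.clog 2 n - 1) < n := Nat.pow_pred_clog_lt_self (by norm_num) hn
  have ht1 : 1 ≤ Nat.clog 2 n := Nat.clog_pos (by norm_num) hn
  set t := Nat.clog 2 n with htdef
  have hl2 : (0.6931471803 : ℝ) < Real.log 2 := Real.log_two_gt_d9
  have hl2' : Real.log 2 < 0.6931471808 := Real.log_two_lt_d9
  rcases lt_or_ge n 4 with h4 | h4
  · -- n = 2 or n = 3, and t ≤ 2 with t = 1 when n = 2
    interval_cases n
    · -- n = 2
      have ht : t = 1 := by
        by_contra h
        have h2 : 2 ≤ t := by omega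
        have : (2:ℕ)^1 ≤ 2^(t-1) := Nat.pow_le_pow_right (by norm_num) (by omega)
        omega
      rw [ht]
      norm_num
      nlinarith
    · -- n = 3
      have ht : t ≤ 2 := by
        by_contra h
        have : (2:ℕ)^2 ≤ 2^(t-1) := Nat.pow_le_pow_right (by norm_num) (by omega)
        omega
      have hlog3 : (1:ℝ) ≤ Real.log 3 := by
        rw [Real.le_log_iff_exp_le (by norm_num)]
        calc Real.exp 1 ≤ 2.7182818286 := Real.exp_one_lt_d9.le
          _ ≤ 3 := by norm_num
      have : (t:ℝ) ≤ 2 := by exact_mod_cast ht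
      push_cast
      nlinarith
  · -- n ≥ 4
    have hlR : ((t - 1 : ℕ) : ℝ) * Real.log 2 < Real.log n := by
      have h1 : ((2:ℝ) ^ (t-1 : ℕ)) < (n : ℝ) := by exact_mod_cast hlt
      have h2 : Real.log ((2:ℝ) ^ (t-1 : ℕ)) < Real.log n :=
        Real.log_lt_log (by positivity) h1
      rwa [Real.log_pow] at h2
    have hcast : ((t - 1 : ℕ) : ℝ) = (t : ℝ) - 1 := by
      push_cast [Nat.cast_sub ht1]
      ring
    rw [hcast] at hlR
    have hln4 : 2 * Real.log 2 ≤ Real.log n := by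
      have : Real.log 4 ≤ Real.log n := by
        apply Real.log_le_log (by norm_num)
        exact_mod_cast h4
      rwa [show (4:ℝ) = 2^2 by norm_num, Real.log_pow] at this
      -- log 4 = 2 log 2
    nlinarith [hlR, hln4, hl2, hl2', Real.log_nonneg (show (1:ℝ) ≤ n by exact_mod_cast le_trans one_le_two hn)]

set_option maxHeartbeats 1000000 in
/-- Flat minimum for Q-norms: for a Q-norm `l(x) = Φ(x²)^{1/2}` on `ℝ^n`
(`Φ` a symmetric norm, `x²` the coordinate-wise square) and every `x` on the
Euclidean unit sphere, `l(ξ^(n)) ≤ 6 √(log n) · l(x)`, where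
`ξ^(n) = (1/√n)(1,…,1)`. -/
theorem qnorm_flat_minimum {n : ℕ} (hn : 2 ≤ n) (Φ : (Fin n → ℝ) → ℝ)
    (htri : ∀ x y, Φ (x + y) ≤ Φ x + Φ y)
    (hhom : ∀ (c : ℝ) x, Φ (c • x) = |c| * Φ x)
    (hdef : ∀ x, Φ x = 0 ↔ x = 0)
    (hperm : ∀ (σ : Equiv.Perm (Fin n)) x, Φ (fun i => x (σ i)) = Φ x)
    (hsign : ∀ x, Φ (fun i => |x i|) = Φ x)
    (x : Fin n → ℝ) (hx : ∑ i, (x i) ^ 2 = 1) :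
    Real.sqrt (Φ (fun _ => (1 / Real.sqrt n) ^ 2)) ≤
      6 * Real.sqrt (Real.log n) * Real.sqrt (Φ (fun i => (x i) ^ 2)) := by
  classical
  set y : Fin n → ℝ := fun j => (x j)^2 with hy
  have hy0 : ∀ j, 0 ≤ y j := fun j => sq_nonneg _
  have hsum : ∑ j, y j = 1 := hx
  have hy1 : ∀ j, y j ≤ 1 := by
    intro j
    calc y j ≤ ∑ j', y j' := Finset.single_le_sum (fun i _ => hy0 i) (mem_univ j)
      _ = 1 := hsum
  set t := Nat.clog 2 n with htdef
  have ht1 : 1 ≤ t := Nat.clog_pos (by norm_num) hn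
  have htR : (1:ℝ) ≤ t := by exact_mod_cast ht1
  have hnR : (2:ℝ) ≤ n := by exact_mod_cast hn
  have hn2t : (n:ℝ) ≤ 2^t := by exact_mod_cast Nat.le_pow_clog (by norm_num) n
  set q : ℝ := 1/4 with hq
  have hq0 : (0:ℝ) < q := by norm_num
  have hq1 : q ≤ 1 := by norm_num
  have hqt : q^t ≤ 1/(n:ℝ)^2 := by
    have h2 : (n:ℝ)^2 ≤ (4:ℝ)^t := by
      have h4 : ((2:ℝ)^t)^2 = 4^t := by
        rw [← pow_mul, show (4:ℝ) = 2^2 by norm_num, ← pow_mul, mul_comm]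
      nlinarith [hn2t, show (0:ℝ) ≤ n by positivity]
    rw [hq, div_pow, one_pow]
    apply div_le_div_of_nonneg_left (by norm_num) (by positivity) h2
    -- 1/4^t ≤ 1/n^2 needs n^2 ≤ 4^t : careful direction
  set U : Finset (Fin n) := univ.filter (fun j => q^t < y j) with hU
  have hUhalf : 1/2 ≤ ∑ j ∈ U, y j := by
    have hsplit := Finset.sum_filter_add_sum_filter_not univ (fun j => q^t < y j) y
    have hrest : ∑ j ∈ univ.filter (fun j => ¬ q^t < y j), y j ≤ 1/2 := by
      have hb : ∀ j ∈ univ.filter (fun j => ¬ q^t < y j), y j ≤ q^t := by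
        intro j hj
        exact not_lt.1 (Finset.mem_filter.1 hj).2
      calc ∑ j ∈ univ.filter (fun j => ¬ q^t < y j), y j
          ≤ ∑ _j ∈ univ.filter (fun j => ¬ q^t < y j), q^t := Finset.sum_le_sum hb
        _ = (univ.filter (fun j => ¬ q^t < y j)).card * q^t := by
            rw [Finset.sum_const, nsmul_eq_mul]
        _ ≤ n * (1/(n:ℝ)^2) := by
            apply mul_le_mul _ hqt (by positivity) (by positivity)
            calc ((univ.filter (fun j => ¬ q^t < y j)).card : ℝ) ≤ (univ : Finset (Fin n)).card := by
                  exact_mod_cast Finset.card_filter_le _ _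
              _ = n := by simp
        _ = 1/(n:ℝ) := by field_simp
        _ ≤ 1/2 := by
            apply div_le_div_of_nonneg_left (by norm_num) (by norm_num) hnR
    rw [hsum] at hsplit
    linarith
  set V : ℕ → Finset (Fin n) := fun i => univ.filter (fun j => q^(i+1) < y j ∧ y j ≤ q^i) with hV
  have hUsub : U ⊆ (range t).biUnion V := by
    intro j hj
    have hjt : q^t < y j := (Finset.mem_filter.1 hj).2
    have hex : ∃ i, ¬ (y j ≤ q^i) := ⟨t, not_le.2 hjt⟩
    have hi0le : Nat.find hex ≤ t := Nat.find_le (not_le.2 hjt)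
    have hi0pos : Nat.find hex ≠ 0 := by
      intro h
      have := Nat.find_spec hex
      rw [h] at this
      exact this (by simpa using hy1 j)
    obtain ⟨i, hieq⟩ : ∃ i, Nat.find hex = i + 1 := ⟨Nat.find hex - 1, by omega⟩
    have hspec : ¬ (y j ≤ q^(i+1)) := hieq ▸ Nat.find_spec hex
    have hmin : y j ≤ q^i := by
      by_contra hc
      exact (Nat.find_min hex (show i < Nat.find hex by omega)) hc
    apply Finset.mem_biUnion.2
    exact ⟨i, Finset.mem_range.2 (by omega), Finset.mem_filter.2
      ⟨mem_univ j, not_le.1 hspec, hmin⟩⟩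
  have hdisj : (↑(range t) : Set ℕ).PairwiseDisjoint V := by
    intro a _ b _ hab
    have key : ∀ a b : ℕ, a < b → Disjoint (V a) (V b) := by
      intro a b h
      rw [Finset.disjoint_left]
      intro j hj1 hj2
      have h1 : q^(a+1) < y j := (Finset.mem_filter.1 hj1).2.1
      have h2 : y j ≤ q^b := (Finset.mem_filter.1 hj2).2.2
      have hle : q^b ≤ q^(a+1) := pow_le_pow_of_le_one hq0.le hq1 (by omega)
      linarith
    rcases lt_or_gt_of_ne hab with h | h
    · exact key a b h
    · exact (key b a h).symm
  have hsum_levels : 1/2 ≤ ∑ i ∈ range t, ∑ j ∈ V i, y j := by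
    calc (1:ℝ)/2 ≤ ∑ j ∈ U, y j := hUhalf
      _ ≤ ∑ j ∈ (range t).biUnion V, y j :=
          Finset.sum_le_sum_of_subset_of_nonneg hUsub (fun j _ _ => hy0 j)
      _ = ∑ i ∈ range t, ∑ j ∈ V i, y j := Finset.sum_biUnion hdisj
  obtain ⟨i, hit, hSi⟩ : ∃ i ∈ range t, 1/(2*(t:ℝ)) ≤ ∑ j ∈ V i, y j := by
    by_contra hc
    push_neg at hc
    have hlt : ∑ i ∈ range t, ∑ j ∈ V i, y j < ∑ _i ∈ range t, 1/(2*(t:ℝ)) :=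
      Finset.sum_lt_sum_of_nonempty (by rw [Finset.nonempty_range_iff]; omega) hc
    rw [Finset.sum_const, Finset.card_range, nsmul_eq_mul] at hlt
    have heq : (t:ℝ) * (1/(2*t)) = 1/2 := by
      field_simp
    linarith
  set m := (V i).card with hm
  have hSle : ∑ j ∈ V i, y j ≤ m * q^i := by
    calc ∑ j ∈ V i, y j ≤ ∑ _j ∈ V i, q^i :=
        Finset.sum_le_sum (fun j hj => (Finset.mem_filter.1 hj).2.2)
      _ = m * q^i := by rw [Finset.sum_const, nsmul_eq_mul]
  have hmq : 1/(2*(t:ℝ)) ≤ m * q^i := hSi.trans hSle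
  have hm1 : 1 ≤ m := by
    by_contra h
    have hm0 : m = 0 := by omega
    rw [hm0] at hmq
    have hpos : (0:ℝ) < 1/(2*(t:ℝ)) := by positivity
    push_cast at hmq
    nlinarith [hmq, hpos]
  have hmR : (1:ℝ) ≤ m := by exact_mod_cast hm1
  have hmn : m ≤ n := by
    calc m ≤ (univ : Finset (Fin n)).card := Finset.card_le_univ _
      _ = n := by simp
  -- lower bound for Φ y
  have hA0 : 0 ≤ Φ (qind (V i)) := phi_nonneg Φ htri hhom _
  have hPy0 : 0 ≤ Φ y := phi_nonneg Φ htri hhom _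
  have key1 : q^(i+1) * Φ (qind (V i)) ≤ Φ y := by
    have h := phi_mono Φ htri hhom hsign (q^(i+1) • qind (V i)) y
      (fun j => by
        simp only [Pi.smul_apply, smul_eq_mul]
        exact mul_nonneg (by positivity) (qind_nonneg _ _))
      (fun j => by
        simp only [Pi.smul_apply, smul_eq_mul, qind]
        by_cases hj : j ∈ V i
        · simp only [hj, if_true, mul_one]
          exact ((Finset.mem_filter.1 hj).2.1).le
        · simp only [hj, if_false, mul_zero]
          exact hy0 j)
    rwa [hhom, abs_of_pos (by positivity)] at h
  set k := n / m + 1 with hk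
  have hcard : (univ : Finset (Fin n)).card ≤ k * m := by
    rw [Finset.card_univ, Fintype.card_fin]
    have h1 : m * (n/m) + n%m = n := Nat.div_add_mod n m
    have h2 : n % m < m := Nat.mod_lt n (by omega)
    have h3 : k * m = m * (n/m) + m := by rw [hk]; ring
    omega
  have key2 : Φ (qind (univ : Finset (Fin n))) ≤ k * Φ (qind (V i)) :=
    phi_ind_le Φ htri hhom hsign hperm (V i) k univ hcard
  have hone : Φ (fun _ : Fin n => (1:ℝ)/n) = (1/(n:ℝ)) * Φ (qind (univ : Finset (Fin n))) := by
    have hfun : (fun _ : Fin n => (1:ℝ)/n) = (1/(n:ℝ)) • qind (univ : Finset (Fin n)) := by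
      funext j
      simp [qind]
    rw [hfun, hhom, abs_of_pos (by positivity)]
  have hkm : (k:ℝ) * m ≤ 2 * n := by
    have h1 : k * m ≤ 2 * n := by
      have h2 : n/m*m ≤ n := Nat.div_mul_le_self n m
      have h3 : k * m = n/m*m + m := by rw [hk, add_mul, one_mul]
      omega
    exact_mod_cast h1
  -- assemble : Φ₀ ≤ 16 t Φy
  set A := Φ (qind (V i)) with hAdef
  set B := Φ (qind (univ : Finset (Fin n))) with hBdef
  set P0 := Φ (fun _ : Fin n => (1:ℝ)/n) with hP0def
  have hP00 : 0 ≤ P0 := phi_nonneg Φ htri hhom _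
  have hn0 : (0:ℝ) < n := by linarith
  have hf5 : P0 * n = B := by
    rw [hone]
    field_simp
  have h2' : P0 * m ≤ 2 * A := by
    have e1 : B * m ≤ ((k:ℝ) * m) * A := by
      calc B * m ≤ ((k:ℝ) * A) * m := by
            apply mul_le_mul_of_nonneg_right _ (by positivity)
            exact_mod_cast key2
        _ = ((k:ℝ) * m) * A := by ring
    have e2 : ((k:ℝ)*m)*A ≤ (2*n)*A := mul_le_mul_of_nonneg_right hkm hA0
    have e0 : P0 * m * n = B * m := by rw [← hf5]; ring
    have : P0 * m * n ≤ (2 * A) * n := by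
      have e3 : (2*(n:ℝ))*A = (2*A)*n := by ring
      linarith [e0, e1, e2]
    exact le_of_mul_le_mul_right this hn0
  have h3' : (1:ℝ) ≤ 2*(t:ℝ)*((m:ℝ)*q^i) := by
    have ht0 : (0:ℝ) < 2*(t:ℝ) := by linarith
    rw [div_le_iff₀ ht0] at hmq
    linarith
  have h4' : q^i * A ≤ 4 * Φ y := by
    have : q^(i+1) = q^i * q := pow_succ q i
    rw [this] at key1
    rw [hq] at key1 ⊢
    linarith
  have hmain : P0 ≤ 16 * (t:ℝ) * Φ y := by
    have c1 : P0 * m ≤ 2*A*(2*(t:ℝ)*((m:ℝ)*q^i)) := by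
      have := mul_le_mul_of_nonneg_left h3' (show (0:ℝ) ≤ 2*A by linarith)
      calc P0 * m ≤ 2*A := h2'
        _ = 2*A*1 := by ring
        _ ≤ 2*A*(2*(t:ℝ)*((m:ℝ)*q^i)) := by linarith
    have c2 : 2*A*(2*(t:ℝ)*((m:ℝ)*q^i)) = (m:ℝ)*((t:ℝ)*(4*(q^i*A))) := by ring
    have c3 : (m:ℝ)*((t:ℝ)*(4*(q^i*A))) ≤ (m:ℝ)*((t:ℝ)*(16*Φ y)) := by
      apply mul_le_mul_of_nonneg_left _ (by positivity)
      apply mul_le_mul_of_nonneg_left _ (by linarith)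
      linarith
    have hfin : P0 * m ≤ (m:ℝ)*((t:ℝ)*(16*Φ y)) := by linarith [c1, c2 ▸ c1]
    have hm0 : (0:ℝ) < m := by linarith
    have := le_of_mul_le_mul_left (a := (m:ℝ)) (by linarith [hfin] : (m:ℝ) * P0 ≤ (m:ℝ)*((t:ℝ)*(16*Φ y))) hm0
    linarith
  have hlog : 16 * (t:ℝ) ≤ 36 * Real.log n := qnorm_log_bound n hn
  have hP36 : P0 ≤ 36 * Real.log n * Φ y := by
    calc P0 ≤ 16 * (t:ℝ) * Φ y := hmain
      _ ≤ 36 * Real.log n * Φ y := mul_le_mul_of_nonneg_right hlog hPy0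
  -- final sqrt step
  have hfun : (fun _ : Fin n => (1/Real.sqrt n)^2) = (fun _ : Fin n => (1:ℝ)/n) := by
    funext j
    rw [div_pow, one_pow, Real.sq_sqrt (by positivity)]
  rw [hfun]
  have hlogn0 : 0 ≤ Real.log n := Real.log_nonneg (by exact_mod_cast le_trans one_le_two hn)
  calc Real.sqrt P0 ≤ Real.sqrt (36 * Real.log n * Φ y) := Real.sqrt_le_sqrt hP36
    _ = 6 * Real.sqrt (Real.log n) * Real.sqrt (Φ y) := by
        rw [Real.sqrt_mul (by positivity) (Φ y), Real.sqrt_mul (by norm_num) (Real.log n),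
          show Real.sqrt 36 = 6 by
            rw [show (36:ℝ) = 6^2 by norm_num]
            exact Real.sqrt_sq (by norm_num)]
end
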